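/- arXiv:1806.10737 — 5 statements merged into one kernel-verified Lean document; each statement's English description precedes it below -/
import Mathlib

section
/- Let Ξ be a set, let (S, Σ, μ) be a measure space with μ(S) < ∞, let h₀ > 0, let h : Ξ → [h₀, ∞) be unbounded, let q ≥ 1 be an integer, let λ_{ξ,j} : S → [0,∞) be measurable for each ξ ∈ Ξ and j = 1,…,q, and let c₉ ≥ 0. Assume: (a) for every ε₁₀ > 0 and every ε₁₁ > 0 there exist a subset Ξ' ⊆ Ξ on which h is unbounded, and measurable sets T_ξ ⊆ S for ξ ∈ Ξ' with μ(T_ξ) ≤ ε₁₁, such that |λ_{η,j}(v)/h(η) − λ_{ζ,j}(v)/h(ζ)| ≤ (4 + c₉/h(η) + c₉/h(ζ))·ε₁₀ for all η, ζ ∈ Ξ', all v ∈ S \ (T_η ∪ T_ζ), and all j = 1,…,q; and (b) for every ε₈ > 0 there is ε₅ > 0 such that ∫_T λ_{ξ,j} dμ ≤ ε₈·(h(ξ) + c₉) for all j = 1,…,q, all ξ ∈ Ξ, and all measurable T ⊆ S with μ(T) ≤ ε₅. For ξ ∈ Ξ define λ_ξ : S → ℝ by λ_ξ(v) = max{λ_{ξ,1}(v),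 …, λ_{ξ,q}(v)}. Then for every integer n ≥ 1, every ε'' > 0, every c'' ∈ ℝ, and every real r_min ≥ 1, there exist ξ₁, …, ξₙ ∈ Ξ, a measurable set T ⊆ S, and a measurable function J : S \ T → {1,…,q} such that h(ξ_i)/h(ξ_{i−1}) ≥ r_min for all i = 2,…,n, and for every i = 1,…,n: ∫_S (λ_{ξ_i}/h(ξ_i)) dμ − ∫_{S\T} min_{1≤i'≤n} ( λ_{ξ_{i'},J(v)}(v)/h(ξ_{i'}) ) dμ(v) + c''/h(ξ₁) ≤ ε''. (Lemma 8.10.) -/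
open MeasureTheory

set_option maxHeartbeats 4000000 in
/-- Lemma 8.10.  With `Ξ`, a finite measure space `(S, Σ, μ)`, `h : Ξ → [h₀, ∞)`
unbounded (`h₀ > 0`), `q ≥ 1`, measurable `λ_{ξ,j} : S → [0, ∞)` and `c₉ ≥ 0`,
assume (a) the conclusion of Lemma 8.9 holds for every `ε₁₀ > 0` and `ε₁₁ > 0`,
and (b) for every `ε₈ > 0` there is `ε₅ > 0` with `∫_T λ_{ξ,j} dμ ≤ ε₈·(h(ξ)+c₉)`
whenever `μ(T) ≤ ε₅`.  Set `λ_ξ = max_j λ_{ξ,j}`.  Then for all `n ≥ 1`,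
`ε'' > 0`, `c'' ∈ ℝ` and `r_min ≥ 1` there exist `ξ₁, …, ξₙ ∈ Ξ`, a measurable
`T ⊆ S` and a measurable `J : S \ T → {1, …, q}` with `h(ξ_i)/h(ξ_{i-1}) ≥ r_min`
for `i = 2, …, n` and, for each `i`,
`∫_S λ_{ξ_i}/h(ξ_i) dμ − ∫_{S\T} min_{i'} λ_{ξ_{i'},J(v)}(v)/h(ξ_{i'}) dμ(v)
 + c''/h(ξ₁) ≤ ε''`. -/
theorem simultaneous_approximation_cost
    {Ω : Type*} [MeasurableSpace Ω] (μ : Measure Ω) (hμfin : μ Set.univ < ⊤)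
    {Ξ : Type*} (h₀ : ℝ) (hh₀ : 0 < h₀) (h : Ξ → ℝ)
    (hge : ∀ ξ, h₀ ≤ h ξ) (hunb : ∀ C : ℝ, ∃ ξ, C < h ξ)
    (q : ℕ) (hq : 1 ≤ q) (lam : Ξ → Fin q → Ω → ℝ)
    (hmeas : ∀ ξ j, Measurable (lam ξ j)) (hnonneg : ∀ ξ j v, 0 ≤ lam ξ j v)
    (c₉ : ℝ) (hc₉ : 0 ≤ c₉)
    (ha : ∀ ε₁₀ > (0 : ℝ), ∀ ε₁₁ > (0 : ℝ), ∃ (Ξ' : Set Ξ) (T : Ξ → Set Ω),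
      (∀ C : ℝ, ∃ ξ ∈ Ξ', C < h ξ) ∧
      (∀ ξ ∈ Ξ', MeasurableSet (T ξ) ∧ μ (T ξ) ≤ ENNReal.ofReal ε₁₁) ∧
      (∀ η ∈ Ξ', ∀ ζ ∈ Ξ', ∀ v ∉ T η ∪ T ζ, ∀ j : Fin q,
        |lam η j v / h η - lam ζ j v / h ζ| ≤ (4 + c₉ / h η + c₉ / h ζ) * ε₁₀))
    (hb : ∀ ε₈ > (0 : ℝ), ∃ ε₅ > (0 : ℝ), ∀ (j : Fin q) (ξ : Ξ) (T : Set Ω),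
      MeasurableSet T → μ T ≤ ENNReal.ofReal ε₅ →
      ∫ v in T, lam ξ j v ∂μ ≤ ε₈ * (h ξ + c₉)) :
    ∀ (n : ℕ) (hn : 1 ≤ n), ∀ ε'' > (0 : ℝ), ∀ (c'' : ℝ), ∀ rmin ≥ (1 : ℝ),
    ∃ (ξ : Fin n → Ξ) (T : Set Ω) (J : Ω → Fin q),
      MeasurableSet T ∧ Measurable J ∧
      (∀ i : Fin n, 0 < i.val →
        rmin ≤ h (ξ i) / h (ξ ⟨i.val - 1, Nat.lt_of_le_of_lt (Nat.sub_le i.val 1) i.isLt⟩)) ∧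
      ∀ i : Fin n,
        (∫ v, (⨆ j : Fin q, lam (ξ i) j v) / h (ξ i) ∂μ) -
          (∫ v in Tᶜ, ⨅ i' : Fin n, lam (ξ i') (J v) v / h (ξ i') ∂μ) +
          c'' / h (ξ ⟨0, Nat.lt_of_lt_of_le Nat.zero_lt_one hn⟩) ≤ ε'' := by
  classical
  intro n hn ε'' hε'' c'' rmin hrmin
  haveI : IsFiniteMeasure μ := ⟨hμfin⟩
  haveI hqne : Nonempty (Fin q) := ⟨⟨0, hq⟩⟩
  haveI hnne : Nonempty (Fin n) := ⟨⟨0, hn⟩⟩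
  have hpos : ∀ x, 0 < h x := fun x => lt_of_lt_of_le hh₀ (hge x)
  -- opaque constants
  obtain ⟨μS, hμSdef⟩ : ∃ x : ℝ, x = (μ Set.univ).toReal := ⟨_, rfl⟩
  have hμS : 0 ≤ μS := hμSdef ▸ ENNReal.toReal_nonneg
  have hμSle : ∀ s : Set Ω, (μ s).toReal ≤ μS := fun s =>
    hμSdef ▸ ENNReal.toReal_mono hμfin.ne (measure_mono (Set.subset_univ _))
  obtain ⟨C, hCdef⟩ : ∃ x : ℝ, x = 4 + 2 * (c₉ / h₀) := ⟨_, rfl⟩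
  have hd0 : 0 ≤ c₉ / h₀ := by positivity
  have hCpos : (0:ℝ) < C := by rw [hCdef]; linarith
  have hCb : ∀ x, c₉ / h x ≤ c₉ / h₀ := fun x =>
    div_le_div_of_nonneg_left hc₉ hh₀ (hge x)
  have hfac : ∀ a b : Ξ, 4 + c₉ / h a + c₉ / h b ≤ C := by
    intro a b; rw [hCdef]; linarith [hCb a, hCb b]
  obtain ⟨ε₁₀, hε₁₀def⟩ : ∃ x : ℝ, x = ε'' / (3 * (2 * C * μS + 1)) := ⟨_, rfl⟩
  have hden : (0:ℝ) < 3 * (2 * C * μS + 1) := by positivity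
  have hε₁₀ : 0 < ε₁₀ := hε₁₀def ▸ div_pos hε'' hden
  have hε₁₀eq : ε₁₀ * (3 * (2 * C * μS + 1)) = ε'' := by
    rw [hε₁₀def]; field_simp
  obtain ⟨K, hKdef⟩ : ∃ x : ℝ, x = (q : ℝ) * (1 + c₉ / h₀) := ⟨_, rfl⟩
  have hq' : (0:ℝ) < (q:ℝ) := by exact_mod_cast hq
  have hK : (0:ℝ) < K := by rw [hKdef]; positivity
  obtain ⟨ε₈, hε₈def⟩ : ∃ x : ℝ, x = ε'' / (3 * K) := ⟨_, rfl⟩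
  have hε₈ : 0 < ε₈ := hε₈def ▸ by positivity
  have hKε : K * ε₈ = ε'' / 3 := by
    rw [hε₈def]; field_simp
  obtain ⟨ε₅, hε₅pos, hε₅⟩ := hb ε₈ hε₈
  have hnpos : (0:ℝ) < (n:ℝ) := by exact_mod_cast hn
  obtain ⟨ε₁₁, hε₁₁def⟩ : ∃ x : ℝ, x = ε₅ / n := ⟨_, rfl⟩
  have hε₁₁ : 0 < ε₁₁ := hε₁₁def ▸ by positivity
  have hnε : (n : ℝ) * ε₁₁ = ε₅ := by rw [hε₁₁def]; field_simp
  obtain ⟨Ξ', Tf, hΞ'unb, hTf, hcomp⟩ := ha ε₁₀ hε₁₀ ε₁₁ hε₁₁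
  -- pick the sequence
  have hpick : ∀ M : ℝ, ∃ x : {x : Ξ // x ∈ Ξ'}, M < h x.1 := by
    intro M; obtain ⟨ξ, hξ, hlt⟩ := hΞ'unb M; exact ⟨⟨ξ, hξ⟩, hlt⟩
  let f : ℕ → {x : Ξ // x ∈ Ξ'} := fun k =>
    Nat.rec (Classical.choose (hpick (3 * |c''| / ε'')))
      (fun _ prev => Classical.choose (hpick (rmin * h prev.1))) k
  have hf0 : 3 * |c''| / ε'' < h (f 0).1 := Classical.choose_spec (hpick _)
  have hfs : ∀ k, rmin * h (f k).1 < h (f (k+1)).1 := fun k =>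
    Classical.choose_spec (hpick (rmin * h (f k).1))
  set ξ : Fin n → Ξ := fun i => (f i.val).1 with hξdef
  have hmem : ∀ i, ξ i ∈ Ξ' := fun i => (f i.val).2
  -- exceptional set
  set T : Set Ω := ⋃ i : Fin n, Tf (ξ i) with hTdef
  have hTmeas : MeasurableSet T := MeasurableSet.iUnion fun i => (hTf _ (hmem i)).1
  have hμT : μ T ≤ ENNReal.ofReal ε₅ := by
    calc μ T ≤ ∑ i : Fin n, μ (Tf (ξ i)) := measure_iUnion_fintype_le _ _
    _ ≤ ∑ _i : Fin n, ENNReal.ofReal ε₁₁ := Finset.sum_le_sum fun i _ => (hTf _ (hmem i)).2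
    _ = (n : ENNReal) * ENNReal.ofReal ε₁₁ := by
        simp [Finset.sum_const, nsmul_eq_mul]
    _ = ENNReal.ofReal ((n : ℝ) * ε₁₁) := by
        rw [ENNReal.ofReal_mul (by positivity)]; simp
    _ = ENNReal.ofReal ε₅ := by rw [hnε]
  -- the selector J
  set P : Ω → Fin q → Prop := fun v j => ∀ j', lam (ξ ⟨0, hn⟩) j' v ≤ lam (ξ ⟨0, hn⟩) j v
    with hPdef
  have hPex : ∀ v, ∃ j, P v j := by
    intro v
    obtain ⟨j, -, hj⟩ := Finset.exists_max_image Finset.univ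
      (fun j => lam (ξ ⟨0, hn⟩) j v) ⟨⟨0, hq⟩, Finset.mem_univ _⟩
    exact ⟨j, fun j' => hj j' (Finset.mem_univ _)⟩
  set J : Ω → Fin q := fun v => Fin.find (P v) (hPex v) with hJdef
  have hfind : ∀ v j, J v = j ↔ P v j ∧ ∀ j' < j, ¬ P v j' := fun v j =>
    Fin.find_eq_iff (hPex v)
  have hJspec : ∀ v, P v (J v) := fun v => Fin.find_spec (hPex v)
  have hJmeas : Measurable J := by
    have hPmeas : ∀ j, MeasurableSet {v | P v j} := by
      intro j
      have : {v | P v j} = ⋂ j', {v | lam (ξ ⟨0, hn⟩) j' v ≤ lam (ξ ⟨0, hn⟩) j v} := by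
        ext v; simp [hPdef, Set.mem_iInter]
      rw [this]
      exact MeasurableSet.iInter fun j' => measurableSet_le (hmeas _ _) (hmeas _ _)
    refine measurable_to_countable' fun j => ?_
    have : J ⁻¹' {j} = {v | P v j} ∩ ⋂ j' : Fin q, {v | P v j' → j ≤ j'} := by
      ext v
      simp only [Set.mem_preimage, Set.mem_singleton_iff, Set.mem_inter_iff,
        Set.mem_iInter, Set.mem_setOf_eq]
      constructor
      · rintro rfl
        have hh := (hfind v (J v)).1 rfl
        exact ⟨hh.1, fun j' hj' => not_lt.1 fun hlt => hh.2 j' hlt hj'⟩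
      · rintro ⟨h1, h2⟩
        exact (hfind v j).2 ⟨h1, fun j' hlt hj' => absurd (h2 j' hj') (not_le.2 hlt)⟩
    rw [this]
    refine (hPmeas j).inter (MeasurableSet.iInter fun j' => ?_)
    by_cases hle : j ≤ j'
    · have : {v | P v j' → j ≤ j'} = Set.univ := by ext v; simp [hle]
      rw [this]; exact MeasurableSet.univ
    · have : {v | P v j' → j ≤ j'} = {v | P v j'}ᶜ := by ext v; simp [hle]
      rw [this]; exact (hPmeas j').compl
  -- measurability of v ↦ lam ζ (J v) v
  have hlamJ : ∀ ζ : Ξ, Measurable fun v => lam ζ (J v) v := by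
    intro ζ
    have h1 : Measurable fun p : Ω × Fin q => lam ζ p.2 p.1 :=
      measurable_from_prod_countable_left fun j => hmeas ζ j
    exact h1.comp (measurable_id.prodMk hJmeas)
  -- the infimum function
  set F : Ω → ℝ := fun v => ⨅ i' : Fin n, lam (ξ i') (J v) v / h (ξ i') with hFdef
  have hFmeas : Measurable F :=
    Measurable.iInf fun i' => (hlamJ (ξ i')).div_const _
  have hFnonneg : ∀ v, 0 ≤ F v := fun v =>
    le_ciInf fun i' => div_nonneg (hnonneg _ _ _) (hpos _).le
  -- the key pointwise comparison
  have hpt : ∀ v, v ∈ Tᶜ → ∀ (a b : Fin n) (j : Fin q),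
      lam (ξ a) j v / h (ξ a) ≤ lam (ξ b) j v / h (ξ b) + C * ε₁₀ := by
    intro v hv a b j
    have hva : v ∉ Tf (ξ a) ∪ Tf (ξ b) := by
      intro hmem'
      apply hv
      rcases hmem' with hc | hc
      · exact Set.mem_iUnion.2 ⟨a, hc⟩
      · exact Set.mem_iUnion.2 ⟨b, hc⟩
    have habs := hcomp _ (hmem a) _ (hmem b) v hva j
    have habs2 : |lam (ξ a) j v / h (ξ a) - lam (ξ b) j v / h (ξ b)| ≤ C * ε₁₀ :=
      habs.trans (mul_le_mul_of_nonneg_right (hfac (ξ a) (ξ b)) hε₁₀.le)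
    have := (abs_sub_le_iff.1 habs2).1
    linarith
  have hkey' : ∀ x : ℝ, h₀ ≤ x → (q : ℝ) * (ε₈ * (x + c₉)) ≤ ε'' / 3 * x := by
    intro x hx
    have e1 : ε'' / 3 = (q : ℝ) * (1 + c₉ / h₀) * ε₈ := by rw [← hKε, hKdef]
    have hD : c₉ ≤ c₉ / h₀ * x := by
      nlinarith [div_mul_cancel₀ c₉ hh₀.ne', mul_nonneg hd0 (sub_nonneg.2 hx)]
    rw [e1]
    nlinarith [mul_nonneg (mul_nonneg hq'.le hε₈.le) (sub_nonneg.2 hD)]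
  have h5' : μS * (2 * C * ε₁₀) ≤ ε'' / 3 := by
    nlinarith [hε₁₀eq, hε₁₀.le]
  -- c'' bound
  have hc'' : c'' / h (ξ ⟨0, hn⟩) ≤ ε'' / 3 := by
    have h1 : 3 * |c''| / ε'' < h (ξ ⟨0, hn⟩) := hf0
    have h2 : 3 * |c''| < h (ξ ⟨0, hn⟩) * ε'' := by
      rw [div_lt_iff₀ hε''] at h1; linarith
    have h3 : c'' ≤ |c''| := le_abs_self c''
    rw [div_le_iff₀ (hpos _)]
    nlinarith [hpos (ξ ⟨0, hn⟩)]
  refine ⟨ξ, T, J, hTmeas, hJmeas, ?_, ?_⟩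
  · -- ratio condition
    intro i hi
    obtain ⟨k, hk⟩ : ∃ k, i.val = k + 1 := ⟨i.val - 1, (Nat.succ_pred_eq_of_pos hi).symm⟩
    have hlt := hfs k
    have he1 : h (ξ i) = h (f (k+1)).1 := by rw [hξdef]; simp [hk]
    have he2 : h (ξ ⟨i.val - 1, Nat.lt_of_le_of_lt (Nat.sub_le i.val 1) i.isLt⟩)
        = h (f k).1 := by rw [hξdef]; simp [hk]
    rw [he1, he2, le_div_iff₀ (hpos _)]
    exact hlt.le
  · -- main estimate
    intro i
    by_cases hInt : Integrable (fun v => (⨆ j : Fin q, lam (ξ i) j v) / h (ξ i)) μ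
    · -- integrable case
      have hIntSup : Integrable (fun v => ⨆ j : Fin q, lam (ξ i) j v) μ := by
        have h1 := hInt.const_mul (h (ξ i))
        refine h1.congr (Filter.Eventually.of_forall fun v => ?_)
        show h (ξ i) * ((⨆ j : Fin q, lam (ξ i) j v) / h (ξ i)) = ⨆ j : Fin q, lam (ξ i) j v
        rw [mul_div_assoc']
        exact mul_div_cancel_left₀ _ (hpos (ξ i)).ne'
      have hbdd : ∀ v, BddAbove (Set.range fun j => lam (ξ i) j v) := fun v =>
        (Set.finite_range _).bddAbove
      have hIntlam : ∀ j, Integrable (lam (ξ i) j) μ := fun j =>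
        hIntSup.mono' (hmeas _ _).aestronglyMeasurable
          (Filter.Eventually.of_forall fun v => by
            rw [Real.norm_eq_abs, abs_of_nonneg (hnonneg _ _ _)]
            exact le_ciSup (hbdd v) j)
      have hFle : ∀ v, F v ≤ (⨆ j : Fin q, lam (ξ i) j v) / h (ξ i) := by
        intro v
        have h1 : F v ≤ lam (ξ i) (J v) v / h (ξ i) :=
          ciInf_le ((Set.finite_range _).bddBelow) i
        refine h1.trans ?_
        gcongr
        · exact (hpos _).le
        · exact le_ciSup (hbdd v) (J v)
      have hIntF : Integrable F (μ.restrict Tᶜ) := by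
        refine (hInt.restrict (s := Tᶜ)).mono' hFmeas.aestronglyMeasurable
          (Filter.Eventually.of_forall fun v => ?_)
        rw [Real.norm_eq_abs, abs_of_nonneg (hFnonneg v)]
        exact hFle v
      have hsplit := integral_add_compl hTmeas hInt
      -- bound on T
      have hbT : ∫ v in T, (⨆ j : Fin q, lam (ξ i) j v) / h (ξ i) ∂μ ≤ ε'' / 3 := by
        rw [integral_div]
        have hsum : ∫ v in T, (⨆ j : Fin q, lam (ξ i) j v) ∂μ
            ≤ ∑ j : Fin q, ∫ v in T, lam (ξ i) j v ∂μ := by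
          rw [← integral_finset_sum _ fun j _ => (hIntlam j).restrict]
          refine integral_mono hIntSup.restrict
            (integrable_finset_sum _ fun j _ => (hIntlam j).restrict) fun v => ?_
          exact ciSup_le fun j =>
            Finset.single_le_sum (f := fun j' => lam (ξ i) j' v)
              (fun j' _ => hnonneg _ _ _) (Finset.mem_univ j)
        have hsum2 : ∑ j : Fin q, ∫ v in T, lam (ξ i) j v ∂μ
            ≤ (q : ℝ) * (ε₈ * (h (ξ i) + c₉)) := by
          calc ∑ j : Fin q, ∫ v in T, lam (ξ i) j v ∂μ
              ≤ ∑ _j : Fin q, ε₈ * (h (ξ i) + c₉) :=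
                Finset.sum_le_sum fun j _ => hε₅ j (ξ i) T hTmeas hμT
          _ = (q : ℝ) * (ε₈ * (h (ξ i) + c₉)) := by
                simp [Finset.sum_const, nsmul_eq_mul]
        rw [div_le_iff₀ (hpos _)]
        linarith [hsum, hsum2, hkey' (h (ξ i)) (hge (ξ i))]
      -- bound on Tᶜ
      have hbTc : ∫ v in Tᶜ, (⨆ j : Fin q, lam (ξ i) j v) / h (ξ i) ∂μ
          ≤ (∫ v in Tᶜ, F v ∂μ) + ε'' / 3 := by
        have hptw : ∀ v ∈ Tᶜ, (⨆ j : Fin q, lam (ξ i) j v) / h (ξ i)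
            ≤ F v + 2 * C * ε₁₀ := by
          intro v hv
          rw [div_le_iff₀ (hpos _)]
          refine ciSup_le fun j => ?_
          rw [← div_le_iff₀ (hpos _)]
          have h1 : lam (ξ i) j v / h (ξ i)
              ≤ lam (ξ ⟨0, hn⟩) j v / h (ξ ⟨0, hn⟩) + C * ε₁₀ := hpt v hv i ⟨0, hn⟩ j
          have h2 : lam (ξ ⟨0, hn⟩) j v / h (ξ ⟨0, hn⟩)
              ≤ lam (ξ ⟨0, hn⟩) (J v) v / h (ξ ⟨0, hn⟩) := by
            gcongr
            · exact (hpos _).le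
            · exact hJspec v j
          have h3 : lam (ξ ⟨0, hn⟩) (J v) v / h (ξ ⟨0, hn⟩) ≤ F v + C * ε₁₀ := by
            rw [← sub_le_iff_le_add]
            refine le_ciInf fun i'' => ?_
            rw [sub_le_iff_le_add]
            exact hpt v hv ⟨0, hn⟩ i'' (J v)
          linarith
        calc ∫ v in Tᶜ, (⨆ j : Fin q, lam (ξ i) j v) / h (ξ i) ∂μ
            ≤ ∫ v in Tᶜ, (F v + 2 * C * ε₁₀) ∂μ :=
              setIntegral_mono_on hInt.restrict (hIntF.add (integrable_const _))
                hTmeas.compl hptw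
        _ = (∫ v in Tᶜ, F v ∂μ) + (μ Tᶜ).toReal * (2 * C * ε₁₀) := by
              rw [integral_add hIntF (integrable_const _), integral_const,
                measureReal_restrict_apply_univ, smul_eq_mul, Measure.real]
        _ ≤ (∫ v in Tᶜ, F v ∂μ) + ε'' / 3 := by
              have h1 : (μ Tᶜ).toReal ≤ μS := hμSle _
              have h2 : 0 ≤ 2 * C * ε₁₀ := by positivity
              have h4 : (μ Tᶜ).toReal * (2 * C * ε₁₀) ≤ μS * (2 * C * ε₁₀) :=
                mul_le_mul_of_nonneg_right h1 h2
              linarith [h5']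
      linarith [hsplit, hbT, hbTc, hc'']
    · -- non-integrable case: the first integral is 0
      rw [integral_undef hInt]
      have h1 : 0 ≤ ∫ v in Tᶜ, F v ∂μ :=
        setIntegral_nonneg hTmeas.compl fun v _ => hFnonneg v
      linarith [hc'', h1, hε'']
end

section
/- Let q ≥ 2 be an integer and let ε' > 0. Then there is an integer n₀ = n₀(q, ε') ≥ 2 such that for every integer n ≥ n₀ there exist real numbers τ > 0 and σ > 0 satisfying q·Vol_n(τ) < 1 < q·Vol_n(τ) + Vol_n(σ) and (2 + ε')·(τ − σ) > n. (Lemma 10.4.) -/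
/-- `Vol n τ` is the Lebesgue measure of
`{(x₁, …, xₙ) ∈ [0,1]ⁿ : x₁ + ⋯ + xₙ < τ}`. -/
noncomputable def Vol (n : ℕ) (τ : ℝ) : ℝ :=
  (MeasureTheory.volume
    {x : Fin n → ℝ | (∀ i, x i ∈ Set.Icc (0 : ℝ) 1) ∧ ∑ i, x i < τ}).toReal

namespace Lem104

open MeasureTheory Set intervalIntegral

abbrev VSet (n : ℕ) (τ : ℝ) : Set (Fin n → ℝ) :=
  {x | (∀ i, x i ∈ Set.Icc (0 : ℝ) 1) ∧ ∑ i, x i < τ}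

lemma vol_def (n : ℕ) (τ : ℝ) : Vol n τ = (volume (VSet n τ)).toReal := rfl

lemma cube_eq (n : ℕ) :
    {x : Fin n → ℝ | ∀ i, x i ∈ Set.Icc (0 : ℝ) 1}
      = Set.pi Set.univ (fun _ : Fin n => Set.Icc (0:ℝ) 1) := by
  ext x; simp [Set.mem_pi, Set.mem_Icc, Pi.le_def, forall_and]

lemma meas_cube (n : ℕ) :
    MeasurableSet {x : Fin n → ℝ | ∀ i, x i ∈ Set.Icc (0 : ℝ) 1} := by
  rw [cube_eq]
  exact MeasurableSet.univ_pi fun _ => measurableSet_Icc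

lemma vol_cube (n : ℕ) :
    volume {x : Fin n → ℝ | ∀ i, x i ∈ Set.Icc (0 : ℝ) 1} = 1 := by
  rw [cube_eq, volume_pi_pi]
  simp [Real.volume_Icc]

lemma meas_VSet (n : ℕ) (τ : ℝ) : MeasurableSet (VSet n τ) := by
  have : VSet n τ = {x : Fin n → ℝ | ∀ i, x i ∈ Set.Icc (0 : ℝ) 1}
      ∩ {x : Fin n → ℝ | ∑ i, x i < τ} := by
    ext x; simp [VSet, Set.mem_setOf_eq, Set.mem_inter_iff, and_comm]
  rw [this]
  exact (meas_cube n).inter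
    (measurableSet_lt (Finset.measurable_sum _ fun i _ => measurable_pi_apply i)
      measurable_const)

lemma vol_le_one (n : ℕ) (τ : ℝ) : volume (VSet n τ) ≤ 1 := by
  rw [← vol_cube n]
  exact measure_mono fun x hx => hx.1

lemma vol_ne_top (n : ℕ) (τ : ℝ) : volume (VSet n τ) ≠ ⊤ :=
  ((vol_le_one n τ).trans_lt ENNReal.one_lt_top).ne

lemma Vol_nonneg (n : ℕ) (τ : ℝ) : 0 ≤ Vol n τ := ENNReal.toReal_nonneg

lemma Vol_le_one (n : ℕ) (τ : ℝ) : Vol n τ ≤ 1 := by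
  rw [vol_def]
  exact ENNReal.toReal_le_of_le_ofReal zero_le_one (by simpa using vol_le_one n τ)

lemma Vol_mono (n : ℕ) {τ τ' : ℝ} (h : τ ≤ τ') : Vol n τ ≤ Vol n τ' := by
  rw [vol_def, vol_def]
  exact ENNReal.toReal_mono (vol_ne_top n τ')
    (measure_mono fun x hx => ⟨hx.1, hx.2.trans_le h⟩)

lemma Vol_one_pos {n : ℕ} (hn : 0 < n) : 0 < Vol n 1 := by
  have : Nonempty (Fin n) := ⟨⟨0, hn⟩⟩
  have hsub : Set.pi Set.univ (fun _ : Fin n => Set.Ioo (0:ℝ) (1/n)) ⊆ VSet n 1 := by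
    intro x hx
    simp only [Set.mem_pi, Set.mem_univ, forall_true_left, Set.mem_Ioo] at hx
    constructor
    · intro i
      refine ⟨(hx i).1.le, (hx i).2.le.trans ?_⟩
      rw [div_le_one (by exact_mod_cast hn)]
      exact_mod_cast hn
    · calc ∑ i, x i < ∑ _i : Fin n, (1:ℝ)/n :=
            Finset.sum_lt_sum_of_nonempty Finset.univ_nonempty fun i _ => (hx i).2
        _ = 1 := by
            rw [Finset.sum_const, Finset.card_univ, Fintype.card_fin, nsmul_eq_mul]
            field_simp
  have hpos : 0 < volume (Set.pi Set.univ (fun _ : Fin n => Set.Ioo (0:ℝ) (1/n))) := by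
    rw [volume_pi_pi]
    simp only [Real.volume_Ioo, sub_zero]
    rw [Finset.prod_const]
    refine ENNReal.pow_pos ?_ _
    rw [ENNReal.ofReal_pos]
    positivity
  rw [vol_def]
  exact ENNReal.toReal_pos (lt_of_lt_of_le hpos (measure_mono hsub)).ne' (vol_ne_top n 1)

lemma Vol_eq_one {n : ℕ} {τ : ℝ} (h : (n:ℝ) < τ) : Vol n τ = 1 := by
  have hsub : {x : Fin n → ℝ | ∀ i, x i ∈ Set.Icc (0 : ℝ) 1} ⊆ VSet n τ := by
    intro x hx
    refine ⟨hx, lt_of_le_of_lt ?_ h⟩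
    calc ∑ i, x i ≤ ∑ _i : Fin n, (1:ℝ) := Finset.sum_le_sum fun i _ => (hx i).2
      _ = n := by simp
  have h1 : (1:ENNReal) ≤ volume (VSet n τ) := by
    rw [← vol_cube n]; exact measure_mono hsub
  rw [vol_def]
  rw [le_antisymm (vol_le_one n τ) h1]
  simp

/-- Left continuity bound. -/
lemma Vol_le_of_forall_lt {n : ℕ} {τ c : ℝ} (hc : 0 ≤ c)
    (h : ∀ t, t < τ → Vol n t ≤ c) : Vol n τ ≤ c := by
  set s : ℕ → Set (Fin n → ℝ) := fun k => VSet n (τ - 1/(k+1)) with hs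
  have hmono : Monotone s := by
    intro k l hkl
    have : 1/((l:ℝ)+1) ≤ 1/((k:ℝ)+1) :=
      one_div_le_one_div_of_le (by positivity) (by exact_mod_cast Nat.succ_le_succ hkl)
    exact fun x hx => ⟨hx.1, hx.2.trans_le (by linarith)⟩
  have hU : ⋃ k, s k = VSet n τ := by
    ext x
    simp only [Set.mem_iUnion]
    constructor
    · rintro ⟨k, hk⟩
      have : (0:ℝ) < 1/((k:ℝ)+1) := by positivity
      exact ⟨hk.1, by have := hk.2; linarith⟩
    · rintro ⟨h1, h2⟩
      obtain ⟨k, hk⟩ := exists_nat_one_div_lt (sub_pos.mpr h2)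
      exact ⟨k, h1, by linarith⟩
  have htend := tendsto_measure_iUnion_atTop (μ := volume) hmono
  rw [hU] at htend
  have hle : volume (VSet n τ) ≤ ENNReal.ofReal c := by
    refine le_of_tendsto htend (Filter.Eventually.of_forall fun k => ?_)
    have hlt : τ - 1/((k:ℝ)+1) < τ := by
      have : (0:ℝ) < 1/((k:ℝ)+1) := by positivity
      linarith
    exact (ENNReal.le_ofReal_iff_toReal_le (vol_ne_top n _) hc).mpr (h _ hlt)
  have := ENNReal.toReal_mono ENNReal.ofReal_ne_top hle
  rwa [ENNReal.toReal_ofReal hc] at this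

lemma hyper_null {n : ℕ} (hn : 0 < n) (τ : ℝ) :
    volume {x : Fin n → ℝ | ∑ i, x i = τ} = 0 := by
  set L : (Fin n → ℝ) →ₗ[ℝ] ℝ := ∑ i, LinearMap.proj i with hL
  have hLx : ∀ x : Fin n → ℝ, L x = ∑ i, x i := by
    intro x; rw [hL]; simp [LinearMap.proj]
  have hker : LinearMap.ker L ≠ ⊤ := by
    intro hk
    have h1 : L (fun _ => 1) = 0 := by
      have : (fun _ => (1:ℝ)) ∈ LinearMap.ker L := by rw [hk]; trivial
      simpa using this
    rw [hLx] at h1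
    simp only [Finset.sum_const, Finset.card_univ, Fintype.card_fin, nsmul_eq_mul,
      mul_one] at h1
    exact (Nat.cast_ne_zero.mpr hn.ne') h1
  have hset : {x : Fin n → ℝ | ∑ i, x i = τ}
      = (fun x : Fin n → ℝ => x + (fun _ => -(τ/n))) ⁻¹' (LinearMap.ker L : Set (Fin n → ℝ)) := by
    ext x
    simp only [Set.mem_setOf_eq, Set.mem_preimage, SetLike.mem_coe, LinearMap.mem_ker]
    rw [hLx]
    have hN : ((n:ℝ)) ≠ 0 := Nat.cast_ne_zero.mpr hn.ne'
    have hτ' : (n:ℝ) * -(τ/n) = -τ := by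
      rw [mul_neg, mul_comm, div_mul_cancel₀ _ hN]
    constructor
    · intro hx
      simp only [Pi.add_apply, Finset.sum_add_distrib, Finset.sum_const,
        Finset.card_univ, Fintype.card_fin, nsmul_eq_mul]
      rw [hτ', hx]; ring
    · intro hx
      simp only [Pi.add_apply, Finset.sum_add_distrib, Finset.sum_const,
        Finset.card_univ, Fintype.card_fin, nsmul_eq_mul, hτ'] at hx
      linarith
  rw [hset, measure_preimage_add_right]
  exact Measure.addHaar_submodule volume (LinearMap.ker L) hker

/-- Right continuity bound. -/
lemma le_Vol_of_forall_gt {n : ℕ} (hn : 0 < n) {τ c : ℝ} (hc : 0 ≤ c)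
    (h : ∀ t, τ < t → c ≤ Vol n t) : c ≤ Vol n τ := by
  set W : Set (Fin n → ℝ) := {x | (∀ i, x i ∈ Set.Icc (0 : ℝ) 1) ∧ ∑ i, x i ≤ τ} with hW
  have hWle : volume W ≤ volume (VSet n τ) := by
    have hsub : W ⊆ VSet n τ ∪ {x : Fin n → ℝ | ∑ i, x i = τ} := by
      intro x hx
      rcases lt_or_eq_of_le hx.2 with h' | h'
      · exact Or.inl ⟨hx.1, h'⟩
      · exact Or.inr h'
    calc volume W ≤ volume (VSet n τ ∪ {x : Fin n → ℝ | ∑ i, x i = τ}) := measure_mono hsub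
      _ ≤ volume (VSet n τ) + volume {x : Fin n → ℝ | ∑ i, x i = τ} := measure_union_le _ _
      _ = volume (VSet n τ) := by rw [hyper_null hn τ, add_zero]
  set s : ℕ → Set (Fin n → ℝ) := fun k => VSet n (τ + 1/(k+1)) with hs
  have hanti : Antitone s := by
    intro k l hkl
    have : 1/((l:ℝ)+1) ≤ 1/((k:ℝ)+1) :=
      one_div_le_one_div_of_le (by positivity) (by exact_mod_cast Nat.succ_le_succ hkl)
    exact fun x hx => ⟨hx.1, hx.2.trans_le (by linarith)⟩
  have hI : ⋂ k, s k = W := by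
    ext x
    simp only [Set.mem_iInter]
    constructor
    · intro hx
      refine ⟨(hx 0).1, ?_⟩
      by_contra hcon
      push_neg at hcon
      obtain ⟨k, hk⟩ := exists_nat_one_div_lt (sub_pos.mpr hcon)
      have := (hx k).2
      linarith
    · rintro ⟨h1, h2⟩ k
      have : (0:ℝ) < 1/((k:ℝ)+1) := by positivity
      exact ⟨h1, by linarith⟩
  have htend := tendsto_measure_iInter_atTop (μ := volume)
    (fun k => (meas_VSet n _).nullMeasurableSet) hanti ⟨0, vol_ne_top n _⟩
  rw [hI] at htend
  have hge : ENNReal.ofReal c ≤ volume W := by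
    refine ge_of_tendsto htend (Filter.Eventually.of_forall fun k => ?_)
    have hlt : τ < τ + 1/((k:ℝ)+1) := by
      have : (0:ℝ) < 1/((k:ℝ)+1) := by positivity
      linarith
    exact ENNReal.ofReal_le_of_le_toReal (h _ hlt)
  have hfin := ENNReal.toReal_mono (vol_ne_top n τ) (hge.trans hWle)
  rwa [ENNReal.toReal_ofReal hc] at hfin

lemma hIcc0 : ∫ _t in Set.Icc (0:ℝ) 1, (1:ℝ) = 1 := by
  rw [setIntegral_const]
  simp [Real.volume_Icc]

lemma hIcc1 : ∫ t in Set.Icc (0:ℝ) 1, (t - 2⁻¹) = 0 := by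
  rw [MeasureTheory.integral_Icc_eq_integral_Ioc,
    ← intervalIntegral.integral_of_le (zero_le_one)]
  rw [intervalIntegral.integral_sub intervalIntegrable_id (intervalIntegrable_const)]
  norm_num [integral_id]

lemma hIcc2 : ∫ t in Set.Icc (0:ℝ) 1, ((t - 2⁻¹) * (t - 2⁻¹)) = 1/12 := by
  rw [MeasureTheory.integral_Icc_eq_integral_Ioc,
    ← intervalIntegral.integral_of_le (zero_le_one)]
  have he : (fun t : ℝ => (t - 2⁻¹) * (t - 2⁻¹)) = fun t : ℝ => t^2 - t + 4⁻¹ := by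
    funext t; ring
  rw [he]
  rw [intervalIntegral.integral_add
      ((by fun_prop : Continuous fun t:ℝ => t^2 - t).intervalIntegrable _ _)
      (continuous_const.intervalIntegrable _ _),
    intervalIntegral.integral_sub ((continuous_pow 2).intervalIntegrable _ _)
      ((by fun_prop : Continuous fun t:ℝ => t).intervalIntegrable _ _)]
  norm_num [integral_id, integral_pow]

lemma cheb (n : ℕ) (T : ℝ) (hT : 0 < (n:ℝ)/2 - T) :
    Vol n T ≤ ((n:ℝ)/12) / ((n:ℝ)/2 - T)^2 := by
  classical
  set a : ℝ := (n:ℝ)/2 - T with ha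
  set φ : Fin n → Fin n → Fin n → ℝ → ℝ := fun i j k => Set.indicator (Set.Icc (0:ℝ) 1)
      (fun t => (if k = i then t - 2⁻¹ else 1) * (if k = j then t - 2⁻¹ else 1)) with hφ
  have hφcont : ∀ i j k : Fin n, Continuous
      (fun t : ℝ => (if k = i then t - 2⁻¹ else 1) * (if k = j then t - 2⁻¹ else 1)) := by
    intro i j k; split_ifs <;> fun_prop
  have hφint : ∀ i j k : Fin n, Integrable (φ i j k) := fun i j k =>
    ((hφcont i j k).integrableOn_Icc).integrable_indicator measurableSet_Icc
  set F : (Fin n → ℝ) → ℝ := fun x => ∑ i, ∑ j, ∏ k, φ i j k (x k) with hF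
  have hFint : Integrable F :=
    integrable_finset_sum _ fun i _ => integrable_finset_sum _ fun j _ =>
      Integrable.fintype_prod fun k => hφint i j k
  have hind : ∀ (s : Set ℝ) (f : ℝ → ℝ) (t : ℝ),
      Set.indicator s f t = Set.indicator s 1 t * f t := by
    intro s f t; by_cases h : t ∈ s <;> simp [h]
  have hFeq : ∀ x : Fin n → ℝ, F x =
      Set.indicator {y : Fin n → ℝ | ∀ i, y i ∈ Set.Icc (0:ℝ) 1} 1 x
        * (∑ i, x i - (n:ℝ)/2)^2 := by
    intro x
    have hcube : Set.indicator {y : Fin n → ℝ | ∀ i, y i ∈ Set.Icc (0:ℝ) 1} 1 x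
        = ∏ k, Set.indicator (Set.Icc (0:ℝ) 1) (1 : ℝ → ℝ) (x k) := by
      by_cases h : ∀ i, x i ∈ Set.Icc (0:ℝ) 1
      · rw [Set.indicator_of_mem (show x ∈ {y : Fin n → ℝ | ∀ i, y i ∈ Set.Icc (0:ℝ) 1} from h)]
        rw [Finset.prod_congr rfl fun k _ => Set.indicator_of_mem (h k) (1 : ℝ → ℝ)]
        simp
      · rw [Set.indicator_of_notMem
          (show x ∉ {y : Fin n → ℝ | ∀ i, y i ∈ Set.Icc (0:ℝ) 1} from h)]
        obtain ⟨k, hk⟩ := not_forall.mp h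
        exact (Finset.prod_eq_zero (Finset.mem_univ k)
          (by simp [Set.indicator_of_notMem hk])).symm
    have hprod : ∀ i j : Fin n, ∏ k, φ i j k (x k)
        = (∏ k, Set.indicator (Set.Icc (0:ℝ) 1) (1 : ℝ → ℝ) (x k))
            * ((x i - 2⁻¹) * (x j - 2⁻¹)) := by
      intro i j
      calc ∏ k, φ i j k (x k)
          = ∏ k, (Set.indicator (Set.Icc (0:ℝ) 1) (1 : ℝ → ℝ) (x k) *
              ((if k = i then x k - 2⁻¹ else 1) * (if k = j then x k - 2⁻¹ else 1))) :=
            Finset.prod_congr rfl fun k _ => hind _ _ _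
        _ = (∏ k, Set.indicator (Set.Icc (0:ℝ) 1) (1 : ℝ → ℝ) (x k)) *
            ((∏ k, if k = i then x k - 2⁻¹ else 1) * (∏ k, if k = j then x k - 2⁻¹ else 1)) := by
            rw [Finset.prod_mul_distrib, Finset.prod_mul_distrib]
        _ = _ := by
            rw [Finset.prod_ite_eq' Finset.univ i (fun k => x k - 2⁻¹),
              Finset.prod_ite_eq' Finset.univ j (fun k => x k - 2⁻¹)]
            simp
    have hsum : ∑ i, (x i - 2⁻¹) = ∑ i, x i - (n:ℝ)/2 := by
      rw [Finset.sum_sub_distrib, Finset.sum_const, Finset.card_univ, Fintype.card_fin,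
        nsmul_eq_mul]
      ring
    simp only [hF, hprod]
    rw [hcube, ← hsum, sq, Finset.sum_mul_sum]
    simp_rw [Finset.mul_sum]
  -- value of the integral of F
  have hφval : ∀ i j k : Fin n, ∫ t, φ i j k t =
      if k = i ∧ k = j then 1/12 else if k = i ∨ k = j then 0 else 1 := by
    intro i j k
    rw [hφ]
    simp only
    rw [MeasureTheory.integral_indicator measurableSet_Icc]
    by_cases hi : k = i
    · subst hi
      by_cases hj : k = j
      · subst hj
        simpa using hIcc2
      · simpa [hj] using hIcc1
    · by_cases hj : k = j
      · subst hj
        simpa [hi] using hIcc1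
      · simpa [hi, hj] using hIcc0
  have hFint_val : ∫ x, F x = (n:ℝ)/12 := by
    rw [hF]
    beta_reduce
    rw [MeasureTheory.integral_finset_sum (μ := volume) _ fun i _ => integrable_finset_sum _ fun j _ =>
      Integrable.fintype_prod fun k => hφint i j k]
    have : ∀ i : Fin n, ∫ x : Fin n → ℝ, ∑ j, ∏ k, φ i j k (x k)
        = ∑ j, ∫ x : Fin n → ℝ, ∏ k, φ i j k (x k) := fun i =>
      MeasureTheory.integral_finset_sum _ fun j _ =>
        Integrable.fintype_prod fun k => hφint i j k
    simp_rw [this]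
    have hij : ∀ i j : Fin n, ∫ x : Fin n → ℝ, ∏ k, φ i j k (x k)
        = if i = j then 1/12 else 0 := by
      intro i j
      rw [volume_pi, MeasureTheory.integral_fintype_prod_eq_prod (φ i j)]
      by_cases h : i = j
      · subst h
        rw [if_pos rfl]
        have : ∀ k : Fin n, (∫ t, φ i i k t) = if k = i then 1/12 else 1 := by
          intro k
          rw [hφval]
          by_cases hk : k = i <;> simp [hk]
        rw [Finset.prod_congr rfl fun k _ => this k, Finset.prod_ite_eq' Finset.univ i
          (fun _ => (1:ℝ)/12)]
        simp
      · rw [if_neg h]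
        refine Finset.prod_eq_zero (Finset.mem_univ i) ?_
        rw [hφval]
        simp [h]
    simp_rw [hij]
    rw [Finset.sum_congr rfl fun i _ => Finset.sum_ite_eq Finset.univ i (fun _ => (1:ℝ)/12)]
    simp only [Finset.mem_univ, if_true, Finset.sum_const, Finset.card_univ, Fintype.card_fin,
      nsmul_eq_mul]
    ring
  -- Markov
  have hBmeas := meas_VSet n T
  have h1 : Vol n T = ∫ x, Set.indicator (VSet n T) 1 x :=
    (MeasureTheory.integral_indicator_one hBmeas).symm
  have hBint : Integrable (Set.indicator (VSet n T) (1 : (Fin n → ℝ) → ℝ)) := by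
    refine (integrableOn_const ?_).integrable_indicator hBmeas
    exact ((vol_le_one n T).trans_lt ENNReal.one_lt_top).ne
  have hpoint : ∀ x : Fin n → ℝ, a^2 * Set.indicator (VSet n T) 1 x ≤ F x := by
    intro x
    by_cases hx : x ∈ VSet n T
    · rw [Set.indicator_of_mem hx, hFeq x, Set.indicator_of_mem
        (show x ∈ {y : Fin n → ℝ | ∀ i, y i ∈ Set.Icc (0:ℝ) 1} from hx.1)]
      have h2 : ∑ i, x i < T := hx.2
      simp only [Pi.one_apply, one_mul, mul_one]
      nlinarith [sq_nonneg (∑ i, x i - (n:ℝ)/2 + a),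
        mul_pos hT (show (0:ℝ) < -(∑ i, x i - (n:ℝ)/2 + a) by
          rw [ha]; linarith)]
    · rw [Set.indicator_of_notMem hx, hFeq x, mul_zero]
      exact mul_nonneg (Set.indicator_nonneg (fun _ _ => by simp) x) (sq_nonneg _)
  have hmain : a^2 * Vol n T ≤ (n:ℝ)/12 := by
    rw [h1, ← MeasureTheory.integral_const_mul, ← hFint_val]
    exact MeasureTheory.integral_mono (hBint.const_mul _) hFint hpoint
  rw [le_div_iff₀ (by positivity : (0:ℝ) < a^2), mul_comm]
  exact hmain

end Lem104

set_option maxHeartbeats 1000000 in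
/-- Lemma 10.4: for every integer `q ≥ 2` and `ε' > 0` there is `n₀ ≥ 2` such
that for all `n ≥ n₀` there exist `τ, σ > 0` with
`q·Vol_n(τ) < 1 < q·Vol_n(τ) + Vol_n(σ)` and `(2 + ε')·(τ − σ) > n`. -/
theorem exists_parameters (q : ℕ) (hq : 2 ≤ q) (ε' : ℝ) (hε' : 0 < ε') :
    ∃ n₀ : ℕ, 2 ≤ n₀ ∧ ∀ n : ℕ, n₀ ≤ n →
      ∃ τ σ : ℝ, 0 < τ ∧ 0 < σ ∧
        (q : ℝ) * Vol n τ < 1 ∧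
        1 < (q : ℝ) * Vol n τ + Vol n σ ∧
        (n : ℝ) < (2 + ε') * (τ - σ) := by
  classical
  have hε2 : (0:ℝ) < 2 + ε' := by linarith
  set δ : ℝ := ε' / (2*(2+ε')) with hδdef
  have hδpos : 0 < δ := div_pos hε' (by linarith)
  refine ⟨2 + ⌈4/δ + (q:ℝ)/δ^2⌉₊, Nat.le_add_right 2 _, ?_⟩
  intro n hn
  have hn2 : 2 ≤ n := le_trans (Nat.le_add_right 2 _) hn
  have hq0 : (0:ℝ) < q := by exact_mod_cast Nat.lt_of_lt_of_le Nat.zero_lt_two hq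
  have hq2 : (2:ℝ) ≤ q := by exact_mod_cast hq
  have hnpos : (0:ℝ) < n := by exact_mod_cast Nat.lt_of_lt_of_le Nat.zero_lt_two hn2
  have hnR : 4/δ + (q:ℝ)/δ^2 ≤ (n:ℝ) := by
    calc 4/δ + (q:ℝ)/δ^2 ≤ (⌈4/δ + (q:ℝ)/δ^2⌉₊ : ℝ) := Nat.le_ceil _
      _ ≤ n := by exact_mod_cast le_trans (Nat.le_add_left _ 2) hn
  set v : ℝ := Vol n 1 with hv
  have hv0 : 0 < v := Lem104.Vol_one_pos (by omega)
  have hv1 : v ≤ 1 := Lem104.Vol_le_one n 1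
  set c : ℝ := (1 - v/2)/q with hc
  have hc0 : 0 < c := div_pos (by linarith) hq0
  have hqc : (q:ℝ) * c = 1 - v/2 := by
    rw [hc, mul_div_cancel₀ _ hq0.ne']
  have hclt1 : c < 1 := by
    rw [hc, div_lt_one hq0]; linarith
  set T : ℝ := (n:ℝ)/(2+ε') + 2 with hT
  have hδT : (n:ℝ)/2 - T = (n:ℝ)*δ - 2 := by
    rw [hT, hδdef]; field_simp; ring
  have h4δ : 4/δ ≤ (n:ℝ) := by
    have : 0 ≤ (q:ℝ)/δ^2 := by positivity
    linarith
  have hnδ4 : 4 ≤ (n:ℝ)*δ := by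
    rw [div_le_iff₀ hδpos] at h4δ
    linarith
  have haT : 0 < (n:ℝ)/2 - T := by rw [hδT]; linarith
  have hqδ : (q:ℝ)/δ^2 < (n:ℝ) := by
    have : (0:ℝ) < 4/δ := by positivity
    linarith
  have hbound : ((n:ℝ)/12) / ((n:ℝ)/2 - T)^2 < 1/(2*q) := by
    rw [hδT, div_lt_div_iff₀ (by nlinarith) (by positivity)]
    have h1 : (n:ℝ)*δ/2 ≤ (n:ℝ)*δ - 2 := by linarith
    have h2 : (q:ℝ) < (n:ℝ)*δ^2 := by
      rw [div_lt_iff₀ (by positivity)] at hqδ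
      linarith
    -- goal : n/12 * (2*q) < 1 * (n*δ-2)^2
    have h3 : ((n:ℝ)*δ/2)^2 ≤ ((n:ℝ)*δ - 2)^2 :=
      pow_le_pow_left₀ (by positivity) h1 2
    nlinarith [h3, mul_lt_mul_of_pos_left h2 hnpos]
  have h12c : 1/(2*(q:ℝ)) ≤ c := by
    rw [hc, div_le_div_iff₀ (by positivity) hq0]
    nlinarith
  have hVolT : Vol n T < c :=
    lt_of_le_of_lt (Lem104.cheb n T haT) (lt_of_lt_of_le hbound h12c)
  set A : Set ℝ := {t | Vol n t ≤ c} with hA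
  have hTA : T ∈ A := le_of_lt hVolT
  have hub : ∀ t ∈ A, t ≤ (n:ℝ)+1 := by
    intro t ht
    by_contra hcon
    push_neg at hcon
    have h1 : Vol n ((n:ℝ)+1) ≤ Vol n t := Lem104.Vol_mono n hcon.le
    rw [Lem104.Vol_eq_one (by linarith)] at h1
    have : Vol n t ≤ c := ht
    linarith
  have hbdd : BddAbove A := ⟨(n:ℝ)+1, hub⟩
  set τ : ℝ := sSup A with hτ
  have hτT : T ≤ τ := le_csSup hbdd hTA
  have hτub : Vol n τ ≤ c := by
    refine Lem104.Vol_le_of_forall_lt hc0.le fun t ht => ?_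
    obtain ⟨s, hsA, hts⟩ := exists_lt_of_lt_csSup ⟨T, hTA⟩ ht
    exact le_trans (Lem104.Vol_mono n hts.le) hsA
  have hτlb : c ≤ Vol n τ := by
    refine Lem104.le_Vol_of_forall_gt (by omega) hc0.le fun t ht => ?_
    have hnotA : t ∉ A := fun hmem => absurd (le_csSup hbdd hmem) (not_le.mpr ht)
    exact (lt_of_not_ge hnotA).le
  have hVolτ : Vol n τ = c := le_antisymm hτub hτlb
  have hT2 : (2:ℝ) ≤ T := by
    rw [hT]
    have : 0 ≤ (n:ℝ)/(2+ε') := by positivity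
    linarith
  refine ⟨τ, 1, by linarith, one_pos, ?_, ?_, ?_⟩
  · rw [hVolτ, hqc]; linarith
  · rw [hVolτ, hqc, ← hv]; linarith
  · have h1 : (n:ℝ)/(2+ε') + 1 ≤ τ - 1 := by
      rw [hT] at hτT; linarith
    calc (n:ℝ) = (2+ε') * ((n:ℝ)/(2+ε')) := by field_simp
      _ < (2+ε') * (τ - 1) := by
          apply mul_lt_mul_of_pos_left _ hε2
          linarith
end

section
/- Let n ≥ 1 be an integer, let d₁, …, dₙ be positive integers, let τ ∈ ℝ, and let J_d(τ) be the number of n-tuples (k₁,…,kₙ) of integers with 0 ≤ k_i ≤ d_i for all i and k₁/d₁ + ⋯ + kₙ/dₙ < τ. Then Vol_n(τ) ≤ J_d(τ)/(d₁⋯dₙ) ≤ Vol_n(τ + Σ_{i=1}^n 1/d_i) + ( ∏_{i=1}^n (1 + 1/d_i) − 1 ). (The lattice-point count versus volume estimate proved in Section 9.) -/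
open MeasureTheory ENNReal

private lemma box_vol (n : ℕ) (d : Fin n → ℕ) (hd : ∀ i, 0 < d i) (k : Fin n → ℕ) :
    volume (Set.pi Set.univ fun i => Set.Ico ((k i : ℝ) / d i) (((k i : ℝ) + 1) / d i))
      = ENNReal.ofReal (∏ i, (1 / (d i : ℝ))) := by
  rw [volume_pi_pi]
  rw [ENNReal.ofReal_prod_of_nonneg (fun i _ => by positivity)]
  refine Finset.prod_congr rfl fun i _ => ?_
  rw [Real.volume_Ico]
  congr 1
  have hdi : (d i : ℝ) ≠ 0 := Nat.cast_ne_zero.2 (hd i).ne'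
  field_simp
  ring

private lemma floor_of_mem_box {d k : ℕ} (hd : 0 < d) {x : ℝ}
    (hx : x ∈ Set.Ico ((k : ℝ) / d) (((k : ℝ) + 1) / d)) : ⌊(d : ℝ) * x⌋₊ = k := by
  have hd' : (0 : ℝ) < d := Nat.cast_pos.2 hd
  obtain ⟨h1, h2⟩ := hx
  rw [div_le_iff₀ hd'] at h1
  rw [lt_div_iff₀ hd'] at h2
  have h0 : (0:ℝ) ≤ (d:ℝ) * x := le_trans (Nat.cast_nonneg k) (by linarith)
  rw [Nat.floor_eq_iff h0]
  constructor <;> nlinarith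

private lemma hyperplane_null (n : ℕ) (i : Fin n) :
    volume {x : Fin n → ℝ | x i = 1} = 0 := by
  have h : {x : Fin n → ℝ | x i = 1} ⊆
      Set.pi Set.univ fun j => if j = i then ({1} : Set ℝ) else Set.univ := by
    intro x hx j _
    by_cases hj : j = i
    · subst hj; simpa using hx
    · simp [hj]
  refine measure_mono_null h ?_
  rw [volume_pi_pi]
  exact Finset.prod_eq_zero (Finset.mem_univ i) (by simp)

/-- The lattice-point count versus volume estimate of Section 9: if
`J_d(τ)` is the number of tuples `(k₁, …, kₙ)` of integers with
`0 ≤ k_i ≤ d_i` and `Σ k_i/d_i < τ`, then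
`Vol_n(τ) ≤ J_d(τ)/(d₁⋯dₙ) ≤ Vol_n(τ + Σ 1/d_i) + (∏ (1 + 1/d_i) − 1)`. -/
theorem lattice_count_vs_volume (n : ℕ) (hn : 1 ≤ n)
    (d : Fin n → ℕ) (hd : ∀ i, 0 < d i) (τ : ℝ) :
    Vol n τ ≤
      (Nat.card {k : Fin n → ℕ //
          (∀ i, k i ≤ d i) ∧ ∑ i, (k i : ℝ) / (d i : ℝ) < τ} : ℝ) /
        ∏ i, (d i : ℝ) ∧
    (Nat.card {k : Fin n → ℕ //
        (∀ i, k i ≤ d i) ∧ ∑ i, (k i : ℝ) / (d i : ℝ) < τ} : ℝ) /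
        ∏ i, (d i : ℝ) ≤
      Vol n (τ + ∑ i, 1 / (d i : ℝ)) + ((∏ i, (1 + 1 / (d i : ℝ))) - 1) := by
  classical
  haveI hNe : Nonempty (Fin n) := Fin.pos_iff_nonempty.mp hn
  have hdR : ∀ i, (0:ℝ) < d i := fun i => Nat.cast_pos.2 (hd i)
  set T : Finset (Fin n → ℕ) := Fintype.piFinset fun i => Finset.range (d i + 1) with hT
  set S : Finset (Fin n → ℕ) :=
    T.filter (fun k => ∑ i, (k i : ℝ) / (d i : ℝ) < τ) with hS
  set B : (Fin n → ℕ) → Set (Fin n → ℝ) :=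
    (fun k => Set.pi Set.univ fun i => Set.Ico ((k i : ℝ) / d i) (((k i : ℝ) + 1) / d i))
    with hB
  set Dd : ℝ := ∏ i, (d i : ℝ) with hDd
  have hDpos : 0 < Dd := Finset.prod_pos fun i _ => hdR i
  set c : ℝ := ∏ i, (1 / (d i : ℝ)) with hc
  have hcpos : 0 < c := Finset.prod_pos fun i _ => one_div_pos.2 (hdR i)
  have hcD : c = Dd⁻¹ := by
    rw [hc, hDd, ← Finset.prod_inv_distrib]
    exact Finset.prod_congr rfl fun i _ => one_div _
  -- cardinality
  have hcard : (Nat.card {k : Fin n → ℕ //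
      (∀ i, k i ≤ d i) ∧ ∑ i, (k i : ℝ) / (d i : ℝ) < τ}) = S.card := by
    have hiff : ∀ k : Fin n → ℕ,
        ((∀ i, k i ≤ d i) ∧ ∑ i, (k i : ℝ) / (d i : ℝ) < τ) ↔ k ∈ S := by
      intro k
      simp [hS, hT, Fintype.mem_piFinset, Nat.lt_succ_iff, Finset.mem_filter, and_comm]
    calc Nat.card {k : Fin n → ℕ //
          (∀ i, k i ≤ d i) ∧ ∑ i, (k i : ℝ) / (d i : ℝ) < τ}
        = Nat.card {k // k ∈ S} := Nat.card_congr (Equiv.subtypeEquivRight hiff)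
      _ = S.card := by simp [Nat.card_eq_fintype_card, Fintype.card_coe]
  -- box facts
  have hBmeas : ∀ k, MeasurableSet (B k) := fun k =>
    MeasurableSet.univ_pi fun i => measurableSet_Ico
  have hBvol : ∀ k, volume (B k) = ENNReal.ofReal c := box_vol n d hd
  have hBdisj : ∀ k k' : Fin n → ℕ, k ≠ k' → Disjoint (B k) (B k') := by
    intro k k' hkk'
    rw [Set.disjoint_left]
    intro x hx hx'
    apply hkk'
    funext i
    have e1 := floor_of_mem_box (hd i) (hx i (Set.mem_univ i))
    have e2 := floor_of_mem_box (hd i) (hx' i (Set.mem_univ i))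
    rw [← e1]; exact e2
  -- lower bound
  have hA'sub : {x : Fin n → ℝ | (∀ i, x i ∈ Set.Ico (0:ℝ) 1) ∧ ∑ i, x i < τ}
      ⊆ ⋃ k ∈ S, B k := by
    rintro x ⟨hx, hxs⟩
    set kx : Fin n → ℕ := fun i => ⌊(d i : ℝ) * x i⌋₊ with hkx
    have h0 : ∀ i, (0:ℝ) ≤ (d i : ℝ) * x i := fun i =>
      mul_nonneg (le_of_lt (hdR i)) (hx i).1
    have hlo : ∀ i, (kx i : ℝ) / d i ≤ x i := by
      intro i
      rw [div_le_iff₀ (hdR i)]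
      calc (kx i : ℝ) ≤ (d i : ℝ) * x i := Nat.floor_le (h0 i)
        _ = x i * d i := mul_comm _ _
    have hhi : ∀ i, x i < ((kx i : ℝ) + 1) / d i := by
      intro i
      rw [lt_div_iff₀ (hdR i)]
      calc x i * d i = (d i : ℝ) * x i := mul_comm _ _
        _ < (kx i : ℝ) + 1 := Nat.lt_floor_add_one _
    have hkS : kx ∈ S := by
      rw [hS, Finset.mem_filter]
      constructor
      · rw [hT, Fintype.mem_piFinset]
        intro i
        rw [Finset.mem_range]
        refine (Nat.floor_lt (h0 i)).2 ?_
        have h2 := (hx i).2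
        push_cast
        nlinarith [hdR i]
      · refine lt_of_le_of_lt ?_ hxs
        exact Finset.sum_le_sum fun i _ => hlo i
    exact Set.mem_biUnion hkS fun i _ => ⟨hlo i, hhi i⟩
  have hsumS : ∀ F : Finset (Fin n → ℕ), ∑ k ∈ F, volume (B k)
      = (F.card : ℝ≥0∞) * ENNReal.ofReal c := by
    intro F
    rw [Finset.sum_congr rfl fun k _ => hBvol k, Finset.sum_const, nsmul_eq_mul]
  have htoReal : ∀ m : ℕ, ((m : ℝ≥0∞) * ENNReal.ofReal c).toReal = m * c := by
    intro m
    rw [ENNReal.toReal_mul, ENNReal.toReal_natCast, ENNReal.toReal_ofReal hcpos.le]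
  have hlow : Vol n τ ≤ (S.card : ℝ) * c := by
    have hmain : volume {x : Fin n → ℝ | (∀ i, x i ∈ Set.Icc (0:ℝ) 1) ∧ ∑ i, x i < τ}
        ≤ (S.card : ℝ≥0∞) * ENNReal.ofReal c := by
      have hsubAN : {x : Fin n → ℝ | (∀ i, x i ∈ Set.Icc (0:ℝ) 1) ∧ ∑ i, x i < τ}
          ⊆ {x | (∀ i, x i ∈ Set.Ico (0:ℝ) 1) ∧ ∑ i, x i < τ}
            ∪ ⋃ i, {x : Fin n → ℝ | x i = 1} := by
        rintro x ⟨hx, hxs⟩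
        by_cases h : ∀ i, x i < 1
        · exact Or.inl ⟨fun i => ⟨(hx i).1, h i⟩, hxs⟩
        · push_neg at h
          obtain ⟨i, hi⟩ := h
          exact Or.inr (Set.mem_iUnion.2 ⟨i, le_antisymm (hx i).2 hi⟩)
      calc volume {x : Fin n → ℝ | (∀ i, x i ∈ Set.Icc (0:ℝ) 1) ∧ ∑ i, x i < τ}
          ≤ volume ({x : Fin n → ℝ | (∀ i, x i ∈ Set.Ico (0:ℝ) 1) ∧ ∑ i, x i < τ}
              ∪ ⋃ i, {x : Fin n → ℝ | x i = 1}) := measure_mono hsubAN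
        _ ≤ volume {x : Fin n → ℝ | (∀ i, x i ∈ Set.Ico (0:ℝ) 1) ∧ ∑ i, x i < τ}
              + volume (⋃ i, {x : Fin n → ℝ | x i = 1}) := measure_union_le _ _
        _ = volume {x : Fin n → ℝ | (∀ i, x i ∈ Set.Ico (0:ℝ) 1) ∧ ∑ i, x i < τ} := by
              rw [measure_iUnion_null fun i => hyperplane_null n i, add_zero]
        _ ≤ volume (⋃ k ∈ S, B k) := measure_mono hA'sub
        _ ≤ ∑ k ∈ S, volume (B k) := measure_biUnion_finset_le S B
        _ = (S.card : ℝ≥0∞) * ENNReal.ofReal c := hsumS S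
    have hne : ((S.card : ℝ≥0∞) * ENNReal.ofReal c) ≠ ⊤ :=
      ENNReal.mul_ne_top (ENNReal.natCast_ne_top _) ENNReal.ofReal_ne_top
    have := ENNReal.toReal_mono hne hmain
    rwa [htoReal] at this
  -- upper bound
  set S₁ : Finset (Fin n → ℕ) := S.filter (fun k => ∀ i, k i < d i) with hS₁
  set S₂ : Finset (Fin n → ℕ) := S.filter (fun k => ¬ ∀ i, k i < d i) with hS₂
  have hsplit : S₁.card + S₂.card = S.card :=
    Finset.card_filter_add_card_filter_not _
  have hBsub : ∀ k ∈ S₁, B k ⊆ {x : Fin n → ℝ |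
      (∀ i, x i ∈ Set.Icc (0:ℝ) 1) ∧ ∑ i, x i < τ + ∑ i, 1 / (d i : ℝ)} := by
    intro k hk x hx
    obtain ⟨hkS, hklt⟩ := Finset.mem_filter.1 hk
    have hkP : ∑ i, (k i : ℝ) / (d i : ℝ) < τ := (Finset.mem_filter.1 hkS).2
    have hxIcc : ∀ i, x i ∈ Set.Icc (0:ℝ) 1 := by
      intro i
      obtain ⟨hx1, hx2⟩ := hx i (Set.mem_univ i)
      refine ⟨le_trans (by positivity) hx1, le_of_lt (lt_of_lt_of_le hx2 ?_)⟩
      rw [div_le_one (hdR i)]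
      exact_mod_cast hklt i
    refine ⟨hxIcc, ?_⟩
    have hlt : ∑ i, x i < ∑ i, ((k i : ℝ) + 1) / d i :=
      Finset.sum_lt_sum_of_nonempty Finset.univ_nonempty
        (fun i _ => (hx i (Set.mem_univ i)).2)
    have heq : ∑ i, ((k i : ℝ) + 1) / d i
        = ∑ i, (k i : ℝ) / (d i : ℝ) + ∑ i, 1 / (d i : ℝ) := by
      rw [← Finset.sum_add_distrib]
      exact Finset.sum_congr rfl fun i _ => add_div _ _ _
    rw [heq] at hlt
    linarith
  have h1 : (S₁.card : ℝ) * c ≤ Vol n (τ + ∑ i, 1 / (d i : ℝ)) := by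
    have hEq : volume (⋃ k ∈ S₁, B k) = (S₁.card : ℝ≥0∞) * ENNReal.ofReal c := by
      rw [measure_biUnion_finset (fun k _ k' _ h => hBdisj k k' h) (fun k _ => hBmeas k)]
      exact hsumS S₁
    have hcube : volume (Set.pi Set.univ fun _ : Fin n => Set.Icc (0:ℝ) 1) = 1 := by
      rw [volume_pi_pi]
      simp [Real.volume_Icc]
    have hsubcube : {x : Fin n → ℝ |
        (∀ i, x i ∈ Set.Icc (0:ℝ) 1) ∧ ∑ i, x i < τ + ∑ i, 1 / (d i : ℝ)}
        ⊆ Set.pi Set.univ fun _ : Fin n => Set.Icc (0:ℝ) 1 := fun x hx j _ => hx.1 j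
    have hfin : volume {x : Fin n → ℝ |
        (∀ i, x i ∈ Set.Icc (0:ℝ) 1) ∧ ∑ i, x i < τ + ∑ i, 1 / (d i : ℝ)} ≠ ⊤ := by
      refine ne_top_of_le_ne_top ?_ (measure_mono hsubcube)
      rw [hcube]
      exact ENNReal.one_ne_top
    have hle : (S₁.card : ℝ≥0∞) * ENNReal.ofReal c
        ≤ volume {x : Fin n → ℝ |
          (∀ i, x i ∈ Set.Icc (0:ℝ) 1) ∧ ∑ i, x i < τ + ∑ i, 1 / (d i : ℝ)} := by
      rw [← hEq]
      exact measure_mono (Set.iUnion₂_subset hBsub)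
    have := ENNReal.toReal_mono hfin hle
    rwa [htoReal] at this
  have h2 : (S₂.card : ℝ) ≤ (∏ i, ((d i : ℝ) + 1)) - Dd := by
    have hsub2 : S₂ ⊆ T \ Fintype.piFinset fun i => Finset.range (d i) := by
      intro k hk
      obtain ⟨hkS, hknot⟩ := Finset.mem_filter.1 hk
      refine Finset.mem_sdiff.2 ⟨(Finset.mem_filter.1 hkS).1, ?_⟩
      simp only [Fintype.mem_piFinset, Finset.mem_range]
      exact hknot
    have hsubT : (Fintype.piFinset fun i => Finset.range (d i)) ⊆ T := by
      intro k hk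
      rw [hT, Fintype.mem_piFinset]
      intro i
      rw [Finset.mem_range]
      have h3 := Fintype.mem_piFinset.1 hk i
      rw [Finset.mem_range] at h3
      exact Nat.lt_succ_of_lt h3
    have hlemono : (∏ i, d i) ≤ ∏ i, (d i + 1) :=
      Finset.prod_le_prod' fun i _ => Nat.le_succ _
    have h2nat : S₂.card ≤ (∏ i, (d i + 1)) - ∏ i, d i := by
      calc S₂.card ≤ (T \ Fintype.piFinset fun i => Finset.range (d i)).card :=
            Finset.card_le_card hsub2
        _ = T.card - (Fintype.piFinset fun i => Finset.range (d i)).card :=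
            Finset.card_sdiff_of_subset hsubT
        _ = (∏ i, (d i + 1)) - ∏ i, d i := by
            rw [hT, Fintype.card_piFinset, Fintype.card_piFinset]
            simp [Finset.card_range]
    have : (S₂.card : ℝ) ≤ (((∏ i, (d i + 1)) - ∏ i, d i : ℕ) : ℝ) :=
      Nat.cast_le.2 h2nat
    rw [Nat.cast_sub hlemono] at this
    push_cast at this ⊢
    convert this using 2 <;> rw [hDd] <;> push_cast <;> ring
  have hprodDiv : (∏ i, ((d i : ℝ) + 1)) / Dd = ∏ i, (1 + 1 / (d i : ℝ)) := by
    rw [hDd, ← Finset.prod_div_distrib]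
    refine Finset.prod_congr rfl fun i _ => ?_
    rw [add_div, div_self (hdR i).ne']
  rw [hcard]
  constructor
  · calc Vol n τ ≤ (S.card : ℝ) * c := hlow
      _ = (S.card : ℝ) / Dd := by rw [hcD, div_eq_mul_inv]
  · have hS2div : (S₂.card : ℝ) / Dd ≤ (∏ i, (1 + 1 / (d i : ℝ))) - 1 := by
      rw [← hprodDiv]
      calc (S₂.card : ℝ) / Dd ≤ ((∏ i, ((d i : ℝ) + 1)) - Dd) / Dd := by
            gcongr
        _ = (∏ i, ((d i : ℝ) + 1)) / Dd - 1 := by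
            rw [sub_div, div_self hDpos.ne']
    have hS1div : (S₁.card : ℝ) / Dd ≤ Vol n (τ + ∑ i, 1 / (d i : ℝ)) := by
      rw [div_eq_mul_inv, ← hcD]
      exact h1
    calc (S.card : ℝ) / Dd = ((S₁.card : ℝ) + S₂.card) / Dd := by
          rw [← hsplit]; push_cast; ring
      _ = (S₁.card : ℝ) / Dd + (S₂.card : ℝ) / Dd := add_div _ _ _
      _ ≤ Vol n (τ + ∑ i, 1 / (d i : ℝ)) + ((∏ i, (1 + 1 / (d i : ℝ))) - 1) :=
          add_le_add hS1div hS2div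
end

section
/- Let n ≥ 1 and let A₁, …, Aₙ be n×n complex Hermitian matrices. Let c ∈ ℂ be the coefficient of the monomial t₁t₂⋯tₙ in the polynomial det(t₁A₁ + ⋯ + tₙAₙ) ∈ ℂ[t₁,…,tₙ] (i.e., n! times the mixed discriminant of A₁,…,Aₙ). If every A_k is positive semidefinite, then c is a nonnegative real number; if every A_k is positive definite, then c is a positive real number. (The pointwise linear-algebra content of Proposition 1.5: a wedge product of positive (resp. semipositive) (1,1)-forms is positive (resp. semipositive), expressed at a point in local coordinates.) -/
open scoped ComplexOrder

namespace MixedDisc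

open MvPolynomial
open scoped Matrix

variable {n : ℕ}

/-- Extract column `i` of a matrix, as a linear map. -/
def colLM (i : Fin n) : Matrix (Fin n) (Fin n) ℂ →ₗ[ℂ] (Fin n → ℂ) where
  toFun M := fun p => M p i
  map_add' := by intros; rfl
  map_smul' := by intros; rfl

/-- The mixed-discriminant multilinear map: `n!` times the mixed discriminant. -/
noncomputable def Dml (n : ℕ) :
    MultilinearMap ℂ (fun _ : Fin n => Matrix (Fin n) (Fin n) ℂ) ℂ :=
  ∑ g : Equiv.Perm (Fin n),
    ((Matrix.detRowAlternating.toMultilinearMap.compLinearMap colLM).domDomCongr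
      (g : Fin n ≃ Fin n))

lemma Dml_apply (A : Fin n → Matrix (Fin n) (Fin n) ℂ) :
    Dml n A = ∑ g : Equiv.Perm (Fin n),
      Matrix.det (Matrix.of fun i p => A (g i) p i) := by
  rw [Dml, MultilinearMap.sum_apply]; rfl

lemma prod_X_monomial (f : Fin n → Fin n) :
    (∏ i, X (f i) : MvPolynomial (Fin n) ℂ) =
      monomial (∑ i, Finsupp.single (f i) 1) 1 := by
  classical
  suffices h : ∀ s : Finset (Fin n), (∏ i ∈ s, X (f i) : MvPolynomial (Fin n) ℂ) =
      monomial (∑ i ∈ s, Finsupp.single (f i) 1) 1 from h Finset.univ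
  intro s
  induction s using Finset.induction_on with
  | empty => simp
  | insert _ _ hx ih =>
      rw [Finset.prod_insert hx, Finset.sum_insert hx, ih, X, monomial_mul, one_mul]

lemma sum_single_eq_iff (f : Fin n → Fin n) :
    (∑ i, Finsupp.single (f i) (1 : ℕ)) = (∑ k, Finsupp.single k (1 : ℕ))
      ↔ Function.Bijective f := by
  classical
  constructor
  · intro h
    rw [Fintype.bijective_iff_surjective_and_card]
    refine ⟨fun k => ?_, rfl⟩
    by_contra hk
    push_neg at hk
    have := congrArg (fun F : Fin n →₀ ℕ => F k) h
    simp only [Finsupp.finset_sum_apply, Finsupp.single_apply] at this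
    rw [Finset.sum_eq_zero (fun i _ => by simp [hk i]),
      Finset.sum_eq_single k (fun b _ hb => by simp [hb]) (by simp)] at this
    simp at this
  · intro h
    exact Fintype.sum_bijective f h _ _ (fun i => rfl)

/-- The coefficient of `t₁⋯tₙ` in `det (∑ tₖ Aₖ)` is a sum over permutations of
determinants of mixed-column matrices. -/
lemma coeff_det_eq (A : Fin n → Matrix (Fin n) (Fin n) ℂ) :
    MvPolynomial.coeff (∑ k : Fin n, Finsupp.single k 1)
      ((Matrix.of fun i j : Fin n => ∑ k : Fin n, X k * C (A k i j)).det)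
    = ∑ g : Equiv.Perm (Fin n), Matrix.det (Matrix.of fun p i => A (g i) p i) := by
  classical
  have hterm : ∀ (σ : Equiv.Perm (Fin n)) (f : Fin n → Fin n),
      (∏ i, (X (f i) * C (A (f i) (σ i) i)) : MvPolynomial (Fin n) ℂ) =
        monomial (∑ i, Finsupp.single (f i) 1) (∏ i, A (f i) (σ i) i) := by
    intro σ f
    rw [Finset.prod_mul_distrib, prod_X_monomial, ← map_prod, C_apply, monomial_mul, add_zero,
      one_mul]
  rw [Matrix.det_apply', coeff_sum]
  trans ∑ σ : Equiv.Perm (Fin n), ∑ g : Equiv.Perm (Fin n),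
      ((Equiv.Perm.sign σ : ℤ) : ℂ) * ∏ i, A (g i) (σ i) i
  · refine Finset.sum_congr rfl fun σ _ => ?_
    rw [(map_intCast (C : ℂ →+* MvPolynomial (Fin n) ℂ) ((Equiv.Perm.sign σ : ℤ))).symm,
      coeff_C_mul, ← Finset.mul_sum]
    congr 1
    simp only [Matrix.of_apply]
    rw [Finset.prod_univ_sum, coeff_sum]
    have h2 : ∀ f ∈ Fintype.piFinset (fun _ : Fin n => (Finset.univ : Finset (Fin n))),
        MvPolynomial.coeff (∑ k : Fin n, Finsupp.single k 1)
          (∏ i, (X (f i) * C (A (f i) (σ i) i)) : MvPolynomial (Fin n) ℂ)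
        = if Function.Bijective f then ∏ i, A (f i) (σ i) i else 0 := by
      intro f _
      rw [hterm, coeff_monomial]
      by_cases h : Function.Bijective f
      · rw [if_pos h, if_pos ((sum_single_eq_iff f).2 h)]
      · rw [if_neg h, if_neg (fun hc => h ((sum_single_eq_iff f).1 hc))]
    rw [Finset.sum_congr rfl h2, ← Finset.sum_filter]
    refine Finset.sum_bij'
      (fun f hf => Equiv.ofBijective f (Finset.mem_filter.1 hf).2)
      (fun g _ => ⇑g) ?_ ?_ ?_ ?_ ?_
    · intro a ha; exact Finset.mem_univ _
    · intro g hg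
      exact Finset.mem_filter.2 ⟨by simp [Fintype.mem_piFinset], g.bijective⟩
    · intro a ha; rfl
    · intro g hg; exact Equiv.ext fun x => rfl
    · intro a ha; rfl
  · rw [Finset.sum_comm]
    refine Finset.sum_congr rfl fun g _ => ?_
    rw [Matrix.det_apply']
    rfl

lemma Dml_eq_coeff (A : Fin n → Matrix (Fin n) (Fin n) ℂ) :
    MvPolynomial.coeff (∑ k : Fin n, Finsupp.single k 1)
      ((Matrix.of fun i j : Fin n => ∑ k : Fin n, X k * C (A k i j)).det)
    = Dml n A := by
  rw [coeff_det_eq, Dml_apply]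
  refine Finset.sum_congr rfl fun g _ => ?_
  rw [← Matrix.det_transpose (Matrix.of fun p i => A (g i) p i)]
  rfl

lemma Dml_rankOne (v : Fin n → (Fin n → ℂ)) :
    Dml n (fun k => Matrix.vecMulVec (v k) (star (v k)))
      = ((starRingEnd ℂ) (Matrix.det (Matrix.of fun i p => v i p))) *
        Matrix.det (Matrix.of fun i p => v i p) := by
  classical
  set V := Matrix.of fun i p => v i p with hV
  rw [Dml_apply]
  have step : ∀ g : Equiv.Perm (Fin n),
      Matrix.det (Matrix.of fun i p => Matrix.vecMulVec (v (g i)) (star (v (g i))) p i)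
      = (((Equiv.Perm.sign g : ℤ) : ℂ) * ∏ i, (starRingEnd ℂ) (v (g i) i)) *
          Matrix.det V := by
    intro g
    have h1 : (Matrix.of fun i p => Matrix.vecMulVec (v (g i)) (star (v (g i))) p i)
        = Matrix.diagonal (fun i => (starRingEnd ℂ) (v (g i) i)) * V.submatrix g id := by
      ext i p
      simp [Matrix.vecMulVec_apply, Matrix.diagonal_mul, Matrix.submatrix_apply, hV, mul_comm]
    rw [h1, Matrix.det_mul, Matrix.det_diagonal, Matrix.det_permute]
    ring
  rw [Finset.sum_congr rfl (fun g _ => step g), ← Finset.sum_mul]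
  congr 1
  conv_rhs => rw [Matrix.det_apply' (M := V), map_sum]
  refine Finset.sum_congr rfl fun g _ => ?_
  rw [map_mul, map_prod, map_intCast]
  rfl

/-- Nonnegativity: the (scaled) mixed discriminant of positive semidefinite matrices is a
nonnegative real. -/
lemma Dml_nonneg (M : Fin n → Matrix (Fin n) (Fin n) ℂ) (h : ∀ k, (M k).PosSemidef) :
    ∃ r : ℝ, 0 ≤ r ∧ Dml n M = (r : ℂ) := by
  classical
  choose B hB using fun k => (by open scoped MatrixOrder in
    exact CStarAlgebra.nonneg_iff_eq_star_mul_self.mp (h k).nonneg :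
      ∃ B : Matrix (Fin n) (Fin n) ℂ, M k = Bᴴ * B)
  set w : Fin n → Fin n → (Fin n → ℂ) := fun k j p => (starRingEnd ℂ) (B k j p) with hw
  have hM : ∀ k, M k = ∑ j, Matrix.vecMulVec (w k j) (star (w k j)) := by
    intro k
    rw [hB k]
    ext p q
    simp only [Matrix.mul_apply, Matrix.star_apply, Matrix.sum_apply, Matrix.vecMulVec_apply,
      Matrix.conjTranspose_apply, hw, Pi.star_apply, RCLike.star_def, starRingEnd_self_apply]
  have hsum : Dml n M = ∑ r : Fin n → Fin n,
      Dml n (fun k => Matrix.vecMulVec (w k (r k)) (star (w k (r k)))) := by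
    rw [show M = fun k => ∑ j, Matrix.vecMulVec (w k j) (star (w k j)) from funext hM]
    exact (Dml n).map_sum _
  refine ⟨∑ r : Fin n → Fin n,
    Complex.normSq (Matrix.det (Matrix.of fun i p => w i (r i) p)), ?_, ?_⟩
  · exact Finset.sum_nonneg fun r _ => Complex.normSq_nonneg _
  · rw [hsum, Complex.ofReal_sum]
    refine Finset.sum_congr rfl fun r _ => ?_
    rw [Dml_rankOne (fun i => w i (r i)), Complex.normSq_eq_conj_mul_self]

lemma smul_one_posSemidef {ε : ℝ} (hε : 0 ≤ ε) :
    ((ε : ℂ) • (1 : Matrix (Fin n) (Fin n) ℂ)).PosSemidef := by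
  rw [Matrix.smul_one_eq_diagonal]
  exact Matrix.posSemidef_diagonal_iff.2 fun i => Complex.zero_le_real.2 hε

lemma posDef_sub_smul_one {M : Matrix (Fin n) (Fin n) ℂ} (hM : M.PosDef) :
    ∃ ε : ℝ, 0 < ε ∧ (M - (ε : ℂ) • 1).PosSemidef := by
  classical
  have hH : M.IsHermitian := hM.1
  rcases Nat.eq_zero_or_pos n with h0 | h0
  · refine ⟨1, one_pos, ?_⟩
    constructor
    · subst h0; ext i j; exact absurd i.2 (by omega)
    · intro x
      subst h0
      have : x = 0 := Finsupp.ext fun i => absurd i.2 (by omega)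
      simp [this]
  · have hne : (Finset.univ : Finset (Fin n)).Nonempty := ⟨⟨0, h0⟩, Finset.mem_univ _⟩
    set ε := Finset.univ.inf' hne hH.eigenvalues with hεdef
    refine ⟨ε, ?_, ?_⟩
    · exact (Finset.lt_inf'_iff hne).2 fun i _ => hM.eigenvalues_pos i
    · have hU := (Matrix.mem_unitaryGroup_iff).mp (hH.eigenvectorUnitary).2
      set U : Matrix (Fin n) (Fin n) ℂ := (hH.eigenvectorUnitary : Matrix (Fin n) (Fin n) ℂ)
      have key : M - (ε : ℂ) • 1
          = U * Matrix.diagonal (fun i => ((hH.eigenvalues i - ε : ℝ) : ℂ)) * Uᴴ := by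
        have hs : M = U * Matrix.diagonal (RCLike.ofReal ∘ hH.eigenvalues) * star U :=
          hH.spectral_theorem
        have hd : Matrix.diagonal (fun i => ((hH.eigenvalues i - ε : ℝ) : ℂ))
            = Matrix.diagonal (RCLike.ofReal ∘ hH.eigenvalues) - (ε : ℂ) • 1 := by
          rw [Matrix.smul_one_eq_diagonal, Matrix.diagonal_sub]
          refine congrArg Matrix.diagonal (funext fun i => ?_)
          simp [Function.comp]
        rw [hd, Matrix.mul_sub, Matrix.sub_mul, ← Matrix.star_eq_conjTranspose, ← hs]
        congr 1
        rw [Matrix.mul_smul, Matrix.smul_mul, mul_one, hU]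
      rw [key]
      refine Matrix.PosSemidef.mul_mul_conjTranspose_same ?_ U
      refine Matrix.posSemidef_diagonal_iff.2 fun i => Complex.zero_le_real.2 ?_
      rw [sub_nonneg]
      exact Finset.inf'_le _ (Finset.mem_univ i)

lemma Dml_one : Dml n (fun _ => (1 : Matrix (Fin n) (Fin n) ℂ)) = ((Nat.factorial n) : ℂ) := by
  rw [Dml_apply]
  have : ∀ g : Equiv.Perm (Fin n),
      Matrix.det (Matrix.of fun i p => (1 : Matrix (Fin n) (Fin n) ℂ) p i) = 1 := by
    intro g
    rw [show (Matrix.of fun i p => (1 : Matrix (Fin n) (Fin n) ℂ) p i)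
      = (1 : Matrix (Fin n) (Fin n) ℂ)ᵀ from rfl, Matrix.det_transpose, Matrix.det_one]
  rw [Finset.sum_congr rfl (fun g _ => this g), Finset.sum_const, Finset.card_univ,
    Fintype.card_perm, Fintype.card_fin, nsmul_eq_mul, mul_one]

end MixedDisc

open scoped ComplexOrder

/-- The pointwise linear-algebra content of Proposition 1.5: let
`A₁, …, Aₙ` be `n×n` complex Hermitian matrices and let `c` be the coefficient
of the monomial `t₁t₂⋯tₙ` in `det(t₁A₁ + ⋯ + tₙAₙ)` (i.e. `n!` times the mixed
discriminant of `A₁, …, Aₙ`).  If every `A_k` is positive semidefinite then `c`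
is a nonnegative real number; if every `A_k` is positive definite then `c` is a
positive real number. -/
theorem mixed_discriminant_pos (n : ℕ) (hn : 1 ≤ n)
    (A : Fin n → Matrix (Fin n) (Fin n) ℂ) (hA : ∀ k, (A k).IsHermitian)
    (c : ℂ)
    (hc : c = MvPolynomial.coeff (∑ k : Fin n, Finsupp.single k 1)
      (Matrix.det (Matrix.of fun i j : Fin n =>
        ∑ k : Fin n, MvPolynomial.X k * MvPolynomial.C (A k i j)))) :
    ((∀ k, (A k).PosSemidef) → c.im = 0 ∧ 0 ≤ c.re) ∧
    ((∀ k, (A k).PosDef) → c.im = 0 ∧ 0 < c.re) := by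
  classical
  have hc' : c = MixedDisc.Dml n A := by rw [hc, MixedDisc.Dml_eq_coeff]
  constructor
  · intro hpsd
    obtain ⟨r, hr, he⟩ := MixedDisc.Dml_nonneg A hpsd
    rw [hc', he]
    exact ⟨Complex.ofReal_im r, by simpa using hr⟩
  · intro hpd
    have hpsd : ∀ k, (A k).PosSemidef := fun k => (hpd k).posSemidef
    choose ε hε hsub using fun k => MixedDisc.posDef_sub_smul_one (hpd k)
    set T : Finset (Fin n) → (Fin n → Matrix (Fin n) (Fin n) ℂ) :=
      fun S k => if k ∈ S then A k else (ε k : ℂ) • 1 with hT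
    have hT0 : MixedDisc.Dml n (T ∅) = (((∏ k, ε k) * (Nat.factorial n) : ℝ) : ℂ) := by
      have : T ∅ = fun k => (ε k : ℂ) • (fun _ : Fin n => (1 : Matrix (Fin n) (Fin n) ℂ)) k := by
        funext k; simp [hT]
      rw [this, (MixedDisc.Dml n).map_smul_univ, MixedDisc.Dml_one, smul_eq_mul]
      push_cast
      ring
    have claim : ∀ S : Finset (Fin n),
        ∃ r : ℝ, 0 ≤ r ∧ MixedDisc.Dml n (T S) = MixedDisc.Dml n (T ∅) + (r : ℂ) := by
      intro S
      induction S using Finset.induction_on with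
      | empty => exact ⟨0, le_refl _, by simp⟩
      | @insert k S hkS ih =>
          obtain ⟨r, hr, he⟩ := ih
          have e1 : T (insert k S) = Function.update (T S) k (A k) := by
            funext j
            by_cases hj : j = k
            · subst hj; simp [hT]
            · simp [hT, Function.update_of_ne hj, Finset.mem_insert, hj]
          have e2 : T S = Function.update (T S) k ((ε k : ℂ) • 1) := by
            funext j
            by_cases hj : j = k
            · subst hj; simp [hT, hkS]
            · simp [Function.update_of_ne hj]
          have hadd := (MixedDisc.Dml n).map_update_add (T S) k
            (A k - (ε k : ℂ) • 1) ((ε k : ℂ) • 1)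
          rw [sub_add_cancel, ← e1, ← e2] at hadd
          have hPSD : ∀ j, (Function.update (T S) k (A k - (ε k : ℂ) • 1) j).PosSemidef := by
            intro j
            by_cases hj : j = k
            · subst hj; simpa using hsub j
            · rw [Function.update_of_ne hj]
              by_cases hjS : j ∈ S
              · simpa [hT, hjS] using hpsd j
              · simpa [hT, hjS] using MixedDisc.smul_one_posSemidef (hε j).le
          obtain ⟨r', hr', he'⟩ := MixedDisc.Dml_nonneg
            (Function.update (T S) k (A k - (ε k : ℂ) • 1)) hPSD
          refine ⟨r' + r, by positivity, ?_⟩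
          rw [hadd, he', he]
          push_cast
          ring
    obtain ⟨r, hr, he⟩ := claim Finset.univ
    have hTu : T Finset.univ = A := by funext k; simp [hT]
    have hcval : c = (((∏ k, ε k) * (Nat.factorial n) + r : ℝ) : ℂ) := by
      rw [hc', ← hTu, he, hT0]
      push_cast
      ring
    rw [hcval]
    constructor
    · exact Complex.ofReal_im _
    · simp only [Complex.ofReal_re]
      have h1 : 0 < (∏ k, ε k) * (Nat.factorial n) :=
        mul_pos (Finset.prod_pos fun k _ => hε k) (by positivity)
      linarith
end

section
/- Let K be a number field and let C ∈ ℝ. Then the set {ξ ∈ K : h_K(ξ) ≤ C} is finite. (The number field case of Northcott's finiteness theorem, Theorem 3.15, applied to the naive height of Proposition 3.16.) -/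
open NumberField IsDedekindDomain
open IsDedekindDomain.HeightOneSpectrum

lemma dvd_of_intValuation_le {R : Type*} [CommRing R] [IsDedekindDomain R] {a d : R} (ha : a ≠ 0)
    (hd : d ≠ 0) (h : ∀ v : HeightOneSpectrum R, v.intValuationDef a ≤ v.intValuationDef d) :
    d ∣ a := by
  classical
  have hsa : Ideal.span {a} ≠ (0 : Ideal R) := by
    simpa [Ideal.span_singleton_eq_bot] using ha
  have hsd : Ideal.span {d} ≠ (0 : Ideal R) := by
    simpa [Ideal.span_singleton_eq_bot] using hd
  rw [← Ideal.span_singleton_le_span_singleton, ← Ideal.dvd_iff_le,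
    UniqueFactorizationMonoid.dvd_iff_normalizedFactors_le_normalizedFactors hsd hsa,
    Multiset.le_iff_count]
  intro p
  by_cases hp : p ∈ UniqueFactorizationMonoid.normalizedFactors (Ideal.span {d})
  · have hprime : Prime p := UniqueFactorizationMonoid.prime_of_normalized_factor p hp
    have hpbot : p ≠ ⊥ := hprime.ne_zero
    have hpP : p.IsPrime := Ideal.isPrime_of_prime hprime
    set v : HeightOneSpectrum R := ⟨p, hpP, hpbot⟩
    have hva := v.intValuationDef_if_neg ha
    have hvd := v.intValuationDef_if_neg hd
    have := h v
    rw [hva, hvd, WithZero.exp_le_exp, neg_le_neg_iff,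
      Int.ofNat_le] at this
    rwa [← count_associates_factors_eq hsd hpP hpbot,
      ← count_associates_factors_eq hsa hpP hpbot]
  · simp [Multiset.count_eq_zero_of_notMem hp]

lemma exists_algebraMap_eq_of_valuation_le {R K : Type*} [CommRing R] [IsDedekindDomain R]
    [Field K] [Algebra R K] [IsFractionRing R K] {x : K}
    (h : ∀ v : HeightOneSpectrum R, v.valuation K x ≤ 1) : ∃ y : R, algebraMap R K y = x := by
  obtain ⟨⟨a, s⟩, rfl⟩ := IsLocalization.mk'_surjective (nonZeroDivisors R) x
  by_cases ha : a = 0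
  · exact ⟨0, by simp [ha]⟩
  have hs : (s : R) ≠ 0 := nonZeroDivisors.coe_ne_zero s
  have hdvd : (s : R) ∣ a := by
    refine dvd_of_intValuation_le ha hs fun v => ?_
    have hle := h v
    rw [valuation_of_mk', div_le_one₀] at hle
    · exact hle
    · exact lt_of_le_of_ne (zero_le') (Ne.symm (v.intValuation_ne_zero _ hs))
  obtain ⟨c, rfl⟩ := hdvd
  refine ⟨c, ?_⟩
  rw [eq_comm, IsLocalization.mk'_eq_iff_eq_mul, map_mul, mul_comm]

/-- The norm at a non-archimedean place of a number field `K`, given by a prime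
`𝔭` of the ring of integers: `‖x‖_𝔭 = (𝓞 K : 𝔭)^(-ord_𝔭 x)` for `x ≠ 0`, and
`‖0‖_𝔭 = 0`. -/
noncomputable def finPlaceNorm (K : Type*) [Field K] [NumberField K]
    (𝔭 : HeightOneSpectrum (𝓞 K)) (x : K) : ℝ :=
  if hx : 𝔭.valuation K x = 0 then 0
  else (Ideal.absNorm 𝔭.asIdeal : ℝ) ^ (Multiplicative.toAdd (WithZero.unzero hx))

/-- The logarithmic height `h_K(ξ) = Σ_v log max {1, ‖ξ‖_v}`, the sum over all
places of `K` (archimedean places correspond to field embeddings `K → ℂ`,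
non-archimedean ones to nonzero primes of the ring of integers; all but
finitely many terms vanish). -/
noncomputable def logHeight (K : Type*) [Field K] [NumberField K] (ξ : K) : ℝ :=
  (∑ᶠ σ : K →+* ℂ, Real.log (max 1 ‖σ ξ‖)) +
  ∑ᶠ 𝔭 : HeightOneSpectrum (𝓞 K), Real.log (max 1 (finPlaceNorm K 𝔭 ξ))

/-- **Northcott's finiteness theorem** for the naive logarithmic height on a
number field: for every `C ∈ ℝ`, the set `{ξ ∈ K : h_K(ξ) ≤ C}` is finite. -/
theorem northcott_numberField (K : Type*) [Field K] [NumberField K] (C : ℝ) :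
    {ξ : K | logHeight K ξ ≤ C}.Finite := by
  classical
  set B := Real.exp C with hB
  have hB0 : (0:ℝ) < B := Real.exp_pos C
  set N := ⌈B⌉₊ with hNdef
  have hN1 : 1 ≤ N := Nat.ceil_pos.mpr hB0
  have hT : {x : K | IsIntegral ℤ x ∧ ∀ φ : K →+* ℂ, ‖φ x‖ ≤ (N : ℝ) * B}.Finite :=
    NumberField.Embeddings.finite_of_norm_le K ℂ _
  refine ((Set.finite_Icc 1 N).biUnion fun m _ => hT.image fun y => y / (m : K)).subset ?_
  intro ξ hξ
  simp only [Set.mem_setOf_eq] at hξ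
  have hterm : ∀ t : ℝ, 0 ≤ Real.log (max 1 t) := fun t => Real.log_nonneg (le_max_left 1 t)
  rcases eq_or_ne ξ 0 with rfl | hξ0
  · refine Set.mem_biUnion (Set.mem_Icc.mpr ⟨le_rfl, hN1⟩) ?_
    refine ⟨0, ⟨isIntegral_zero, fun φ => ?_⟩, by simp⟩
    simp only [map_zero, norm_zero]
    positivity
  have hA0 : 0 ≤ ∑ᶠ σ : K →+* ℂ, Real.log (max 1 (‖σ ξ‖)) :=
    finsum_nonneg fun _ => hterm _
  have hF0 : 0 ≤ ∑ᶠ 𝔭 : HeightOneSpectrum (𝓞 K), Real.log (max 1 (finPlaceNorm K 𝔭 ξ)) :=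
    finsum_nonneg fun _ => hterm _
  rw [logHeight] at hξ
  have hA : (∑ᶠ σ : K →+* ℂ, Real.log (max 1 (‖σ ξ‖))) ≤ C := by linarith
  have hF : (∑ᶠ 𝔭 : HeightOneSpectrum (𝓞 K), Real.log (max 1 (finPlaceNorm K 𝔭 ξ))) ≤ C := by
    linarith
  -- archimedean bound
  have harch : ∀ φ : K →+* ℂ, ‖φ ξ‖ ≤ B := by
    intro φ
    have h1 : Real.log (max 1 (‖φ ξ‖)) ≤ C := by
      rw [finsum_eq_sum_of_fintype] at hA
      exact le_trans (Finset.single_le_sum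
        (f := fun σ : K →+* ℂ => Real.log (max 1 (‖σ ξ‖)))
        (fun _ _ => hterm _) (Finset.mem_univ φ)) hA
    have h2 : max 1 (‖φ ξ‖) ≤ B :=
      (Real.log_le_iff_le_exp (lt_of_lt_of_le one_pos (le_max_left _ _))).mp h1
    exact le_trans (le_max_right 1 _) h2
  -- the valuations of ξ are nonzero
  have hvne : ∀ 𝔭 : HeightOneSpectrum (𝓞 K), 𝔭.valuation K ξ ≠ 0 := fun 𝔭 =>
    (Valuation.ne_zero_iff _).mpr hξ0
  set e : HeightOneSpectrum (𝓞 K) → ℤ :=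
    fun 𝔭 => Multiplicative.toAdd (WithZero.unzero (hvne 𝔭)) with he
  have hval : ∀ 𝔭 : HeightOneSpectrum (𝓞 K),
      𝔭.valuation K ξ = ((Multiplicative.ofAdd (e 𝔭) : Multiplicative ℤ) : WithZero (Multiplicative ℤ)) := by
    intro 𝔭
    rw [he]
    simp only [ofAdd_toAdd, WithZero.coe_unzero]
  have hnorm : ∀ 𝔭 : HeightOneSpectrum (𝓞 K),
      finPlaceNorm K 𝔭 ξ = (Ideal.absNorm 𝔭.asIdeal : ℝ) ^ (e 𝔭) := by
    intro 𝔭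
    rw [finPlaceNorm, dif_neg (hvne 𝔭)]
  have hNb : ∀ 𝔭 : HeightOneSpectrum (𝓞 K), (1:ℝ) ≤ (Ideal.absNorm 𝔭.asIdeal : ℝ) := by
    intro 𝔭
    rw [Nat.one_le_cast, Nat.one_le_iff_ne_zero, Ne, Ideal.absNorm_eq_zero_iff]
    exact 𝔭.ne_bot
  have hle1 : ∀ 𝔭 : HeightOneSpectrum (𝓞 K), 𝔭.valuation K ξ ≤ 1 → finPlaceNorm K 𝔭 ξ ≤ 1 := by
    intro 𝔭 h1
    rw [hnorm]
    refine zpow_le_one_of_nonpos₀ (hNb 𝔭) ?_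
    rw [hval 𝔭, ← WithZero.coe_one, WithZero.coe_le_coe] at h1
    simpa [← Multiplicative.toAdd_le] using h1
  -- the denominator
  obtain ⟨⟨aN, dD⟩, hmk⟩ := IsLocalization.mk'_surjective (nonZeroDivisors (𝓞 K)) ξ
  have hd0 : (dD : 𝓞 K) ≠ 0 := nonZeroDivisors.coe_ne_zero dD
  have hout : ∀ 𝔭 : HeightOneSpectrum (𝓞 K),
      ¬ 𝔭.asIdeal ∣ Ideal.span {(dD : 𝓞 K)} → 𝔭.valuation K ξ ≤ 1 := by
    intro 𝔭 hnd
    have hdlt : ¬ (𝔭.intValuationDef (dD : 𝓞 K) < 1) := fun hlt =>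
      hnd ((𝔭.intValuation_lt_one_iff_dvd _).mp hlt)
    have hdne : 𝔭.intValuation (dD : 𝓞 K) ≠ 0 := 𝔭.intValuation_ne_zero _ hd0
    have hprod : 𝔭.valuation K ξ * 𝔭.intValuation (dD : 𝓞 K) = 𝔭.intValuation aN := by
      rw [← hmk, valuation_of_mk', div_mul_cancel₀ _ hdne]
    have hd1' : 𝔭.intValuation (dD : 𝓞 K) = 1 :=
      le_antisymm (𝔭.intValuation_le_one _) (not_lt.mp hdlt)
    calc 𝔭.valuation K ξ = 𝔭.intValuation aN := by rw [← hprod, hd1', mul_one]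
      _ ≤ 1 := 𝔭.intValuation_le_one _
  set S : Set (HeightOneSpectrum (𝓞 K)) := {𝔭 | 𝔭.asIdeal ∣ Ideal.span {(dD : 𝓞 K)}} with hSdef
  have hS : S.Finite := Ideal.finite_factors (by simp [Ideal.span_singleton_eq_bot, hd0])
  have hsupp : (Function.support fun 𝔭 => Real.log (max 1 (finPlaceNorm K 𝔭 ξ))) ⊆ S := by
    intro 𝔭 h𝔭
    by_contra hns
    have : max 1 (finPlaceNorm K 𝔭 ξ) = 1 := max_eq_left (hle1 𝔭 (hout 𝔭 hns))
    exact h𝔭 (by simp [this])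
  have hFsum : (∑ᶠ 𝔭 : HeightOneSpectrum (𝓞 K), Real.log (max 1 (finPlaceNorm K 𝔭 ξ))) =
      ∑ 𝔭 ∈ hS.toFinset, Real.log (max 1 (finPlaceNorm K 𝔭 ξ)) :=
    finsum_eq_finset_sum_of_support_subset _ (by rwa [Set.Finite.coe_toFinset])
  set m : ℕ := ∏ 𝔭 ∈ hS.toFinset, Ideal.absNorm 𝔭.asIdeal ^ (e 𝔭).toNat with hm
  have hNpos : ∀ 𝔭 : HeightOneSpectrum (𝓞 K), 0 < Ideal.absNorm 𝔭.asIdeal := by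
    intro 𝔭
    exact Nat.pos_of_ne_zero fun h => 𝔭.ne_bot (Ideal.absNorm_eq_zero_iff.mp h)
  have hm0 : 0 < m := Finset.prod_pos fun 𝔭 _ => pow_pos (hNpos 𝔭) _
  have hmB : (m : ℝ) ≤ B := by
    have hlog : Real.log (m : ℝ) ≤ C := by
      rw [hm]
      push_cast
      rw [Real.log_prod (fun 𝔭 _ => by have := hNpos 𝔭; positivity)]
      refine le_trans (Finset.sum_le_sum ?_) (hFsum ▸ hF)
      intro 𝔭 _
      rcases le_or_gt (e 𝔭) 0 with hle | hpos
      · rw [Int.toNat_of_nonpos hle]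
        simpa using hterm _
      · have heq : ((Ideal.absNorm 𝔭.asIdeal : ℝ)) ^ (e 𝔭).toNat = finPlaceNorm K 𝔭 ξ := by
          rw [hnorm, ← zpow_natCast, Int.toNat_of_nonneg hpos.le]
        have h1 : (1:ℝ) ≤ finPlaceNorm K 𝔭 ξ := by
          rw [hnorm]
          exact one_le_zpow₀ (hNb 𝔭) hpos.le
        rw [heq, max_eq_right h1]
    have := (Real.log_le_iff_le_exp (by exact_mod_cast hm0)).mp hlog
    exact this
  have hmN : m ≤ N := by
    have : (m : ℝ) ≤ (N : ℝ) := hmB.trans (Nat.le_ceil B)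
    exact_mod_cast this
  -- integrality of m • ξ
  have hmap : ((m : K)) = algebraMap (𝓞 K) K ((m : 𝓞 K)) := by
    simp
  have hint : ∀ 𝔭 : HeightOneSpectrum (𝓞 K), 𝔭.valuation K ((m : K) * ξ) ≤ 1 := by
    intro 𝔭
    rw [Valuation.map_mul, hmap, valuation_of_algebraMap]
    rcases le_or_gt (𝔭.valuation K ξ) 1 with hv1 | hv1
    · exact mul_le_one' (𝔭.intValuation_le_one _) hv1
    · have h𝔭S : 𝔭 ∈ hS.toFinset := by
        rw [Set.Finite.mem_toFinset]
        by_contra hns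
        exact absurd (hout 𝔭 hns) (not_le.mpr hv1)
      have hepos : 0 < e 𝔭 := by
        rw [hval 𝔭, ← WithZero.coe_one, WithZero.coe_lt_coe] at hv1
        simpa [← Multiplicative.toAdd_lt] using hv1
      -- split the product
      have hsplit : (m : 𝓞 K) = ((Ideal.absNorm 𝔭.asIdeal : 𝓞 K)) ^ (e 𝔭).toNat *
          ((∏ 𝔮 ∈ hS.toFinset.erase 𝔭, Ideal.absNorm 𝔮.asIdeal ^ (e 𝔮).toNat : ℕ) : 𝓞 K) := by
        rw [hm, ← Finset.mul_prod_erase _ _ h𝔭S]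
        push_cast
        ring
      have hN1' : 𝔭.intValuation ((Ideal.absNorm 𝔭.asIdeal : 𝓞 K)) ≤
          ((Multiplicative.ofAdd (-1 : ℤ) : Multiplicative ℤ) : WithZero (Multiplicative ℤ)) := by
        have hlt : 𝔭.intValuation ((Ideal.absNorm 𝔭.asIdeal : 𝓞 K)) < 1 := by
          rw [intValuation_lt_one_iff_dvd, Ideal.dvd_span_singleton]
          exact_mod_cast Ideal.absNorm_mem 𝔭.asIdeal
        have hne : 𝔭.intValuation ((Ideal.absNorm 𝔭.asIdeal : 𝓞 K)) ≠ 0 :=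
          𝔭.intValuation_ne_zero _ (Nat.cast_ne_zero.mpr (hNpos 𝔭).ne')
        rw [← WithZero.coe_unzero hne] at hlt ⊢
        rw [← WithZero.coe_one, WithZero.coe_lt_coe] at hlt
        rw [WithZero.coe_le_coe]
        have h0 : Multiplicative.toAdd (WithZero.unzero hne) < 0 := by
          simpa using Multiplicative.toAdd_lt.mpr hlt
        rw [← Multiplicative.toAdd_le, toAdd_ofAdd]
        omega
      have hrest : 𝔭.intValuation
          ((∏ 𝔮 ∈ hS.toFinset.erase 𝔭, Ideal.absNorm 𝔮.asIdeal ^ (e 𝔮).toNat : ℕ) : 𝓞 K) ≤ 1 :=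
        𝔭.intValuation_le_one _
      have hbound : 𝔭.intValuation ((m : 𝓞 K)) ≤
          ((Multiplicative.ofAdd (-(e 𝔭)) : Multiplicative ℤ) : WithZero (Multiplicative ℤ)) := by
        rw [hsplit, map_mul, map_pow]
        calc 𝔭.intValuation ((Ideal.absNorm 𝔭.asIdeal : 𝓞 K)) ^ (e 𝔭).toNat *
              𝔭.intValuation _ ≤
            (((Multiplicative.ofAdd (-1 : ℤ) : Multiplicative ℤ) : WithZero (Multiplicative ℤ))) ^ (e 𝔭).toNat * 1 :=
              mul_le_mul' (pow_le_pow_left' hN1' _) hrest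
          _ = ((Multiplicative.ofAdd (-(e 𝔭)) : Multiplicative ℤ) : WithZero (Multiplicative ℤ)) := by
              simp only [mul_one, ← WithZero.coe_pow, WithZero.coe_inj, ← ofAdd_nsmul,
                nsmul_eq_mul]
              congr 1
              omega
      calc 𝔭.intValuation ((m : 𝓞 K)) * 𝔭.valuation K ξ ≤
          ((Multiplicative.ofAdd (-(e 𝔭)) : Multiplicative ℤ) : WithZero (Multiplicative ℤ)) *
            ((Multiplicative.ofAdd (e 𝔭) : Multiplicative ℤ) : WithZero (Multiplicative ℤ)) := by
            rw [hval 𝔭]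
            exact mul_le_mul_left hbound _
        _ = 1 := by
            rw [← WithZero.coe_mul, ← ofAdd_add, neg_add_cancel]
            rfl
  obtain ⟨y, hy⟩ := exists_algebraMap_eq_of_valuation_le hint
  refine Set.mem_biUnion (Set.mem_Icc.mpr ⟨hm0, hmN⟩) ?_
  refine ⟨(m : K) * ξ, ⟨?_, ?_⟩, ?_⟩
  · rw [← hy]
    exact RingOfIntegers.isIntegral_coe y
  · intro φ
    rw [map_mul, norm_mul, map_natCast φ m]
    have h1 : ‖(m : ℂ)‖ ≤ (N : ℝ) := by
      rw [Complex.norm_natCast]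
      exact_mod_cast hmN
    exact mul_le_mul h1 (harch φ) (norm_nonneg _) (Nat.cast_nonneg N)
  · have hmne : (m : K) ≠ 0 := Nat.cast_ne_zero.mpr hm0.ne'
    field_simp
end
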